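/- arXiv:2208.02535 — 3 statements merged into one kernel-verified Lean document; each statement's English description precedes it below -/
import Mathlib

section
/- Let p be a prime number, n < p-1 a natural number, and (A,+,∘) a left brace of cardinality p^n. Then the pre-Lie ring (A/ann(p^2), +, •) is left nilpotent; in fact [b_1]•([b_2]•(⋯([b_n]•[b_{n+1}])⋯)) = 0 for all b_1, …, b_{n+1} ∈ A. -/
universe u

/-- A left brace: `(A,+)` abelian group, `(A,∘)` a group, with
`a∘(b+c)+a = a∘b+a∘c`. -/
structure LeftBrace (A : Type u) [AddCommGroup A] where
  circ : A → A → A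
  one : A
  inv : A → A
  circ_assoc : ∀ a b c : A, circ (circ a b) c = circ a (circ b c)
  one_circ : ∀ a : A, circ one a = a
  circ_one : ∀ a : A, circ a one = a
  inv_circ : ∀ a : A, circ (inv a) a = one
  circ_add : ∀ a b c : A, circ a (b + c) + a = circ a b + circ a c

/-- `a*b = a∘b - a - b`. -/
def LeftBrace.star {A : Type u} [AddCommGroup A] (B : LeftBrace A) (a b : A) : A :=
  B.circ a b - a - b

/-- `ann(k) = {a : k•a = 0}`, as an additive subgroup. -/
def annSub (A : Type u) [AddCommGroup A] (k : ℕ) : AddSubgroup A where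
  carrier := {a : A | k • a = 0}
  zero_mem' := by simp
  add_mem' := by
    intro a b ha hb
    have ha' : k • a = 0 := ha
    have hb' : k • b = 0 := hb
    show k • (a + b) = 0
    rw [smul_add, ha', hb', add_zero]
  neg_mem' := by
    intro a ha
    have ha' : k • a = 0 := ha
    show k • (-a) = 0
    rw [smul_neg, ha', neg_zero]

/-- The coset `[a]` of `a` in `A/ann(k)`. -/
def qmk {A : Type u} [AddCommGroup A] (k : ℕ) (a : A) : A ⧸ annSub A k :=
  QuotientAddGroup.mk a

/-- Evaluation of a non-associative word under a binary operation `op`,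
substituting `f i` for the variable `i`. -/
def wEval {α : Type*} {β : Type*} (op : β → β → β) (f : α → β) : FreeMagma α → β
  | FreeMagma.of a => f a
  | FreeMagma.mul x y => op (wEval op f x) (wEval op f y)

/-- The list of leaves (occurrences of variables, left to right) of a word. -/
def wLeaves {α : Type*} : FreeMagma α → List α
  | FreeMagma.of a => [a]
  | FreeMagma.mul x y => wLeaves x ++ wLeaves y

/-- The last (rightmost) variable of a word. -/
def wLast {α : Type*} : FreeMagma α → α
  | FreeMagma.of a => a
  | FreeMagma.mul _ y => wLast y

/-- The number of occurrences of the variable `a` in a word. -/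
def wCount {α : Type*} [DecidableEq α] (a : α) : FreeMagma α → ℕ
  | FreeMagma.of b => if b = a then 1 else 0
  | FreeMagma.mul x y => wCount a x + wCount a y

/-- The length (number of variable occurrences) of a word. -/
def wLen {α : Type*} : FreeMagma α → ℕ
  | FreeMagma.of _ => 1
  | FreeMagma.mul x y => wLen x + wLen y

/-- Left-normed product `a₁·(a₂·(⋯(aₘ·b)⋯))`. -/
def leftProd {Q : Type*} (mul : Q → Q → Q) : List Q → Q → Q
  | [], b => b
  | a :: l, b => mul a (leftProd mul l b)

/-- `circPow B a k` is the product of `k` copies of `a` under `∘`. -/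
def circPow {A : Type u} [AddCommGroup A] (B : LeftBrace A) (a : A) : ℕ → A
  | 0 => B.one
  | k + 1 => B.circ a (circPow B a k)

/-- `eSeq B a (i-1)` is `a_i`, where `a_1 = a` and `a_{i+1} = a * a_i`. -/
def eSeq {A : Type u} [AddCommGroup A] (B : LeftBrace A) (a : A) : ℕ → A
  | 0 => a
  | i + 1 => B.star a (eSeq B a i)

/-- `starIter B a b (i-1)` is `e_i`, where `e_1 = a*b` and `e_{i+1} = a*e_i`. -/
def starIter {A : Type u} [AddCommGroup A] (B : LeftBrace A) (a b : A) : ℕ → A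
  | 0 => B.star a b
  | i + 1 => B.star a (starIter B a b i)

/-- `iterOp op u v i` is `u ⊙ (u ⊙ (⋯ (u ⊙ v)))` with `i` applications of `u ⊙ ·`. -/
def iterOp {Q : Type*} (op : Q → Q → Q) (u v : Q) : ℕ → Q
  | 0 => v
  | i + 1 => op u (iterOp op u v i)

/-- `f(a) = Σ_{i=1}^{p−1} (C(p−1,i−1)/i)·e_i` where `e_1 = a`, `e_{i+1} = a*e_i`. -/
def fMap {A : Type u} [AddCommGroup A] (B : LeftBrace A) (p : ℕ) (a : A) : A :=
  ∑ i ∈ Finset.Icc 1 (p - 1), (Nat.choose (p - 1) (i - 1) / i) • eSeq B a (i - 1)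

/-- `braceChainAux B (i-1)` is `A^i`: `A^1 = A`, `A^{i+1}` the additive subgroup
generated by `{x*y : x ∈ A, y ∈ A^i}`. -/
def braceChainAux {A : Type u} [AddCommGroup A] (B : LeftBrace A) : ℕ → AddSubgroup A
  | 0 => ⊤
  | i + 1 => AddSubgroup.closure {z : A | ∃ x : A, ∃ y ∈ braceChainAux B i, z = B.star x y}

/-- `dSeq B a b i = (d_i, d_i')`: `d_0 = a`, `d_0' = b`, `d_{i+1} = d_i + d_i'`,
`d_{i+1}' = d_i * d_i'`. -/
def dSeq {A : Type u} [AddCommGroup A] (B : LeftBrace A) (a b : A) : ℕ → A × A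
  | 0 => (a, b)
  | i + 1 => ((dSeq B a b i).1 + (dSeq B a b i).2, B.star (dSeq B a b i).1 (dSeq B a b i).2)

namespace StmtOne
open Finset AddSubgroup

variable {A : Type u} [AddCommGroup A] (B : LeftBrace A)

theorem circ_zero (a : A) : B.circ a 0 = a := by
  have h := B.circ_add a 0 0
  rw [add_zero] at h
  exact (add_left_cancel h).symm

theorem one_eq_zero : B.one = 0 := by
  have := circ_zero B B.one
  rw [B.one_circ] at this
  exact this.symm

theorem circ_add' (g x y : A) : B.circ g (x + y) = B.circ g x + B.circ g y - g :=
  eq_sub_of_add_eq (B.circ_add g x y)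

theorem circ_neg (g x : A) : B.circ g (-x) = g + g - B.circ g x := by
  have h := B.circ_add g x (-x)
  rw [add_neg_cancel, circ_zero] at h
  have : B.circ g (-x) = g + g - B.circ g x := by
    rw [eq_sub_iff_add_eq, add_comm (B.circ g (-x)), ← h]
  exact this

/-- `λ_g(x) = g∘x - g` as an additive monoid hom. -/
def lamH (g : A) : A →+ A where
  toFun x := B.circ g x - g
  map_zero' := by show B.circ g 0 - g = 0; rw [circ_zero, sub_self]
  map_add' x y := by
    show B.circ g (x + y) - g = (B.circ g x - g) + (B.circ g y - g)
    rw [circ_add' B g x y]; abel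

theorem lamH_apply (g x : A) : lamH B g x = B.circ g x - g := rfl

theorem lamH_one (x : A) : lamH B B.one x = x := by
  rw [lamH_apply, B.one_circ, one_eq_zero, sub_zero]

theorem lamH_comp (g h x : A) : lamH B g (lamH B h x) = lamH B (B.circ g h) x := by
  rw [lamH_apply, lamH_apply, lamH_apply, sub_eq_add_neg (B.circ h x) h,
    circ_add' B g, circ_neg]
  rw [B.circ_assoc]
  abel

theorem circ_inv_right (g : A) : B.circ g (B.inv g) = B.one := by
  calc B.circ g (B.inv g) = B.circ B.one (B.circ g (B.inv g)) := (B.one_circ _).symm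
    _ = B.circ (B.circ (B.inv (B.inv g)) (B.inv g)) (B.circ g (B.inv g)) := by
        rw [B.inv_circ]
    _ = B.circ (B.inv (B.inv g)) (B.circ (B.circ (B.inv g) g) (B.inv g)) := by
        rw [B.circ_assoc, B.circ_assoc]
    _ = B.one := by rw [B.inv_circ, B.one_circ, B.inv_circ]

theorem lamH_inv_left (g x : A) : lamH B (B.inv g) (lamH B g x) = x := by
  rw [lamH_comp, B.inv_circ, lamH_one]

theorem lamH_inv_right (g x : A) : lamH B g (lamH B (B.inv g) x) = x := by
  rw [lamH_comp, circ_inv_right, lamH_one]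

theorem star_eq (a b : A) : B.star a b = lamH B a b - b := rfl

theorem lamH_eq_add_star (a b : A) : lamH B a b = b + B.star a b := by
  rw [star_eq]; abel

theorem star_zero_left (b : A) : B.star 0 b = 0 := by
  rw [LeftBrace.star, ← one_eq_zero B, B.one_circ, one_eq_zero B]; abel

theorem star_add_right (a x y : A) : B.star a (x + y) = B.star a x + B.star a y := by
  rw [star_eq, map_add, star_eq, star_eq]; abel

theorem star_zero_right (a : A) : B.star a 0 = 0 := by
  rw [star_eq, map_zero, sub_zero]

end StmtOne
namespace StmtOne
variable {A : Type u} [AddCommGroup A] (B : LeftBrace A)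
open Finset AddSubgroup

theorem star_mem_chain (x : A) {y : A} {i : ℕ} (hy : y ∈ braceChainAux B i) :
    B.star x y ∈ braceChainAux B (i + 1) :=
  AddSubgroup.subset_closure ⟨x, y, hy, rfl⟩

theorem chain_succ_le (i : ℕ) : braceChainAux B (i + 1) ≤ braceChainAux B i := by
  induction i with
  | zero => exact le_top
  | succ i ih =>
    refine (AddSubgroup.closure_le _).2 ?_
    rintro z ⟨x, y, hy, rfl⟩
    exact star_mem_chain B x (ih hy)

theorem chain_le {i j : ℕ} (h : i ≤ j) : braceChainAux B j ≤ braceChainAux B i := by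
  induction j with
  | zero => rw [Nat.le_zero.mp h]
  | succ j ih =>
    rcases Nat.lt_or_ge i (j+1) with hlt | hge
    · exact (chain_succ_le B j).trans (ih (Nat.lt_succ_iff.mp hlt))
    · rw [Nat.le_antisymm h hge]

theorem lamH_mem_chain (g : A) {x : A} {i : ℕ} (hx : x ∈ braceChainAux B i) :
    lamH B g x ∈ braceChainAux B i := by
  induction i generalizing x with
  | zero => exact AddSubgroup.mem_top _
  | succ i _ =>
    revert hx
    show x ∈ braceChainAux B (i+1) → lamH B g x ∈ braceChainAux B (i+1)
    intro hx
    have : braceChainAux B (i+1) ≤ (braceChainAux B (i+1)).comap (lamH B g) := by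
      refine (AddSubgroup.closure_le _).2 ?_
      rintro z ⟨u, y, hy, rfl⟩
      have h1 : lamH B g (B.star u y) = B.star (B.circ g u) y - B.star g y := by
        rw [star_eq, map_sub, lamH_comp, lamH_eq_add_star, lamH_eq_add_star]
        abel
      simp only [SetLike.mem_coe, AddSubgroup.mem_comap, h1]
      exact sub_mem (star_mem_chain B _ hy) (star_mem_chain B _ hy)
    exact this hx

theorem eSeq_mem_chain {a : A} {m : ℕ} (ha : a ∈ braceChainAux B m) (i : ℕ) :
    eSeq B a i ∈ braceChainAux B (m + i) := by
  induction i with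
  | zero => exact ha
  | succ i ih => exact star_mem_chain B a ih

theorem starIter_mem_chain (a : A) {b : A} {j : ℕ} (hb : b ∈ braceChainAux B j) (i : ℕ) :
    starIter B a b i ∈ braceChainAux B (j + i + 1) := by
  induction i with
  | zero => exact star_mem_chain B a hb
  | succ i ih => exact star_mem_chain B a ih

theorem circPow_succ' (a : A) (k : ℕ) :
    circPow B a (k + 1) = B.circ (circPow B a k) a := by
  induction k with
  | zero => show B.circ a B.one = B.circ B.one a; rw [B.circ_one, B.one_circ]
  | succ k ih =>
    show B.circ a (circPow B a (k+1)) = B.circ (circPow B a (k+1)) a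
    conv_lhs => rw [ih]
    rw [← B.circ_assoc]
    rfl

theorem starIter_shift (a b : A) (i : ℕ) :
    starIter B a (B.star a b) i = starIter B a b (i + 1) := by
  induction i with
  | zero => rfl
  | succ i ih => show B.star a _ = _; rw [ih]; rfl

theorem lamH_pow (a : A) (k : ℕ) : ∀ b : A,
    lamH B (circPow B a k) b = b + ∑ i ∈ range k, (k.choose (i+1)) • starIter B a b i := by
  induction k with
  | zero =>
    intro b
    show lamH B B.one b = _
    rw [lamH_one, Finset.range_zero, Finset.sum_empty, add_zero]
  | succ k ih =>
    intro b
    rw [circPow_succ', ← lamH_comp, ih (lamH B a b), lamH_eq_add_star B a b]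
    have hsplit : ∀ i : ℕ, starIter B a (b + B.star a b) i
        = starIter B a b i + starIter B a b (i+1) := by
      intro i
      induction i with
      | zero => show B.star a (b + B.star a b) = _; rw [star_add_right]; rfl
      | succ i ihh => show B.star a _ = _; rw [ihh, star_add_right]; rfl
    have hsum : ∑ i ∈ range k, (k.choose (i+1)) • starIter B a (b + B.star a b) i
        = ∑ i ∈ range k, (k.choose (i+1)) • starIter B a b i
          + ∑ i ∈ range k, (k.choose (i+1)) • starIter B a b (i+1) := by
      rw [← Finset.sum_add_distrib]
      refine Finset.sum_congr rfl fun i _ => ?_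
      rw [hsplit i, smul_add]
    rw [hsum]
    -- now pure binomial bookkeeping
    have htarget : ∑ i ∈ range (k+1), ((k+1).choose (i+1)) • starIter B a b i
        = (∑ i ∈ range k, (k.choose (i+1)) • starIter B a b i)
          + (B.star a b + ∑ i ∈ range k, (k.choose (i+1)) • starIter B a b (i+1)) := by
      have h1 : ∀ i ∈ range (k+1), ((k+1).choose (i+1)) • starIter B a b i
          = (k.choose i) • starIter B a b i + (k.choose (i+1)) • starIter B a b i := by
        intro i _
        rw [Nat.choose_succ_succ', add_smul]
      rw [Finset.sum_congr rfl h1, Finset.sum_add_distrib]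
      have h2 : ∑ i ∈ range (k+1), (k.choose (i+1)) • starIter B a b i
          = ∑ i ∈ range k, (k.choose (i+1)) • starIter B a b i := by
        rw [Finset.sum_range_succ, Nat.choose_eq_zero_of_lt (Nat.lt_succ_self k),
          zero_smul, add_zero]
      have h3 : ∑ i ∈ range (k+1), (k.choose i) • starIter B a b i
          = B.star a b + ∑ i ∈ range k, (k.choose (i+1)) • starIter B a b (i+1) := by
        rw [Finset.sum_range_succ']
        simp only [Nat.choose_zero_right, one_smul]
        show _ = starIter B a b 0 + _
        rw [add_comm]
      rw [h2, h3]
      abel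
    rw [htarget]
    abel

theorem circPow_sum (a : A) (k : ℕ) :
    circPow B a k = ∑ i ∈ range k, (k.choose (i+1)) • eSeq B a i := by
  induction k with
  | zero => show B.one = _; rw [one_eq_zero, Finset.range_zero, Finset.sum_empty]
  | succ k ih =>
    have hcirc : circPow B a (k+1) = lamH B (circPow B a k) a + circPow B a k := by
      rw [circPow_succ', lamH_apply]; abel
    have hIter : ∀ i, starIter B a a i = eSeq B a (i+1) := by
      intro i
      induction i with
      | zero => rfl
      | succ i ihh => show B.star a _ = _; rw [ihh]; rfl
    rw [hcirc, lamH_pow, ih]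
    have htarget : ∑ i ∈ range (k+1), ((k+1).choose (i+1)) • eSeq B a i
        = (∑ i ∈ range k, (k.choose (i+1)) • eSeq B a (i+1))
          + (a + ∑ i ∈ range k, (k.choose (i+1)) • eSeq B a i) := by
      have h1 : ∀ i ∈ range (k+1), ((k+1).choose (i+1)) • eSeq B a i
          = (k.choose i) • eSeq B a i + (k.choose (i+1)) • eSeq B a i := by
        intro i _
        rw [Nat.choose_succ_succ', add_smul]
      rw [Finset.sum_congr rfl h1, Finset.sum_add_distrib]
      have h2 : ∑ i ∈ range (k+1), (k.choose (i+1)) • eSeq B a i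
          = ∑ i ∈ range k, (k.choose (i+1)) • eSeq B a i := by
        rw [Finset.sum_range_succ, Nat.choose_eq_zero_of_lt (Nat.lt_succ_self k),
          zero_smul, add_zero]
      have h3 : ∑ i ∈ range (k+1), (k.choose i) • eSeq B a i
          = a + ∑ i ∈ range k, (k.choose (i+1)) • eSeq B a (i+1) := by
        rw [Finset.sum_range_succ']
        simp only [Nat.choose_zero_right, one_smul]
        show _ = a + _
        rw [add_comm]
        rfl
      rw [h2, h3]
      abel
    rw [htarget]
    have : ∑ i ∈ range k, (k.choose (i+1)) • starIter B a a i
        = ∑ i ∈ range k, (k.choose (i+1)) • eSeq B a (i+1) :=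
      Finset.sum_congr rfl fun i _ => by rw [hIter]
    rw [this]
    abel

end StmtOne
namespace StmtOne
variable {A : Type u} [AddCommGroup A] (B : LeftBrace A)
open Finset AddSubgroup

/-- `H(a) = Σ_{i=2}^{p-1} (C(p,i)/p)·e_i(a)`. -/
def Hh (p : ℕ) (a : A) : A :=
  ∑ i ∈ range (p - 2), (p.choose (i+2) / p) • eSeq B a (i+1)

theorem Hh_mem_chain {p m : ℕ} {a : A} (ha : a ∈ braceChainAux B m) :
    Hh B p a ∈ braceChainAux B (m + 1) := by
  refine AddSubgroup.sum_mem _ fun i _ => AddSubgroup.nsmul_mem _ ?_ _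
  exact chain_le B (by omega) (eSeq_mem_chain B ha (i+1))

section Main

variable {p n : ℕ} (hp : p.Prime) (hn : n < p - 1) (hbot : braceChainAux B n = ⊥)

include hp hn hbot

theorem circPow_p (a : A) : circPow B a p = p • (a + Hh B p a) := by
  have hp2 : 2 ≤ p := hp.two_le
  have h1 : p - 1 + 1 = p := by omega
  have h2 : p - 2 + 1 = p - 1 := by omega
  rw [circPow_sum]
  -- split off the last term i = p-1
  have hsplit := Finset.sum_range_succ (fun i => (p.choose (i+1)) • eSeq B a i) (p - 1)
  rw [h1] at hsplit
  rw [hsplit]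
  have hlast : eSeq B a (p - 1) = 0 := by
    have := chain_le B (show n ≤ 0 + (p-1) by omega) (eSeq_mem_chain B (mem_top a) (p-1))
    rw [hbot] at this
    exact this
  simp only [hlast, smul_zero, add_zero]
  -- now each coefficient C(p,i+1) for i < p-1 equals p * (C(p,i+1)/p)
  have hcoef : ∀ i ∈ range (p-1), (p.choose (i+1)) • eSeq B a i
      = p • ((p.choose (i+1) / p) • eSeq B a i) := by
    intro i hi
    rw [Finset.mem_range] at hi
    rw [← mul_smul]
    congr 1
    exact (Nat.mul_div_cancel' (hp.dvd_choose_self (by omega) (by omega))).symm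
  rw [Finset.sum_congr rfl hcoef, ← Finset.smul_sum]
  congr 1
  have hsplit2 := Finset.sum_range_succ' (fun i => (p.choose (i+1) / p) • eSeq B a i) (p - 2)
  rw [h2] at hsplit2
  rw [hsplit2]
  have hc1 : p.choose (0 + 1) / p = 1 := by
    rw [Nat.choose_one_right, Nat.div_self hp.pos]
  rw [hc1, one_smul]
  show _ + eSeq B a 0 = a + Hh B p a
  rw [add_comm]
  rfl

/-- KEY LEMMA: `(p•a)*b ∈ p•A^{j+1}` (chain-indexed from 0). -/
theorem key_div (d : ℕ) : ∀ m, n ≤ m + d → ∀ a ∈ braceChainAux B m,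
    ∀ j b, b ∈ braceChainAux B j →
    ∃ c ∈ braceChainAux B (j + 1), B.star (p • a) b = p • c := by
  induction d with
  | zero =>
    intro m hm a ha j b _
    have ha0 : a = 0 := by
      have := chain_le B (by omega : n ≤ m) ha
      rw [hbot] at this
      exact this
    refine ⟨0, zero_mem _, ?_⟩
    rw [ha0, smul_zero, star_zero_left]
  | succ d ih =>
    intro m hm a ha j b hb
    set u := circPow B a p with hu
    set k0 := lamH B (B.inv u) (Hh B p a) with hk0def
    have hk0 : k0 ∈ braceChainAux B (m + 1) :=
      lamH_mem_chain B _ (Hh_mem_chain B ha)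
    set x := p • (-k0) with hxdef
    have hux : B.circ u x = p • a := by
      have h1 : B.circ u x = lamH B u x + u := by rw [lamH_apply]; abel
      have h2 : lamH B u (-k0) = -(Hh B p a) := by
        rw [map_neg, hk0def, lamH_inv_right]
      rw [h1, hxdef, map_nsmul, h2, hu, circPow_p B hp hn hbot, smul_add, smul_neg]
      abel
    -- star decomposition
    have hstar : B.star (p • a) b = lamH B u (B.star x b) + (lamH B u b - b) := by
      rw [← hux, star_eq, ← lamH_comp, lamH_eq_add_star B x b, map_add]
      abel
    -- second summand via binomial
    obtain ⟨c0, hc0, hxb⟩ := ih (m+1) (by omega) (-k0) (neg_mem hk0) j b hb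
    have hxb' : B.star x b = p • c0 := by rw [hxdef]; exact hxb
    have hbin : lamH B u b - b
        = ∑ i ∈ range p, (p.choose (i+1)) • starIter B a b i := by
      rw [hu, lamH_pow]; abel
    have h1 : p - 1 + 1 = p := by omega
    have hlastT : starIter B a b (p-1) = 0 := by
      have := chain_le B (show n ≤ j + (p-1) + 1 by omega) (starIter_mem_chain B a hb (p-1))
      rw [hbot] at this
      exact this
    have hbin2 : lamH B u b - b
        = p • ∑ i ∈ range (p-1), (p.choose (i+1) / p) • starIter B a b i := by
      have hsplit := Finset.sum_range_succ (fun i => (p.choose (i+1)) • starIter B a b i) (p - 1)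
      rw [h1] at hsplit
      rw [hbin, hsplit, hlastT, smul_zero, add_zero, Finset.smul_sum]
      refine Finset.sum_congr rfl fun i hi => ?_
      rw [Finset.mem_range] at hi
      rw [← mul_smul]
      congr 1
      exact (Nat.mul_div_cancel' (hp.dvd_choose_self (by omega) (by omega))).symm
    set S := ∑ i ∈ range (p-1), (p.choose (i+1) / p) • starIter B a b i with hSdef
    have hS : S ∈ braceChainAux B (j + 1) := by
      refine AddSubgroup.sum_mem _ fun i _ => AddSubgroup.nsmul_mem _ ?_ _
      exact chain_le B (by omega) (starIter_mem_chain B a hb i)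
    refine ⟨lamH B u c0 + S, add_mem (lamH_mem_chain B _ hc0) hS, ?_⟩
    rw [hstar, hxb', map_nsmul, hbin2, smul_add]

end Main
end StmtOne
namespace StmtOne
open Finset AddSubgroup

/-- Additive automorphisms with the multiplicative group structure (composition). -/
abbrev AddAutM (M : Type u) [Add M] := M ≃+ M

instance (M : Type u) [Add M] : Group (AddAutM M) where
  mul g h := AddEquiv.trans h g
  one := AddEquiv.refl _
  inv := AddEquiv.symm
  mul_assoc _ _ _ := rfl
  one_mul _ := rfl
  mul_one _ := rfl
  inv_mul_cancel := AddEquiv.self_trans_symm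

theorem AddAutM.mul_apply {M : Type u} [Add M] (e₁ e₂ : AddAutM M) (m : M) :
    (e₁ * e₂) m = e₁ (e₂ m) := rfl

instance (M : Type u) [Add M] : MulAction (AddAutM M) M where
  smul e m := e m
  one_smul _ := rfl
  mul_smul _ _ _ := rfl

/-- Nakayama-type lemma: if a `p`-group acts on a finite abelian `p`-group `M`
and the differences `g•y - y` generate `M`, then `M` is trivial. -/
theorem nakayama {p : ℕ} (hp : p.Prime) {G : Type u} [Group G] (hG : IsPGroup p G) :
    ∀ (k : ℕ) (M : Type u) [AddCommGroup M], Nat.card M = k → (∃ m : ℕ, k = p ^ m) →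
    ∀ (ρ : G →* AddAutM M),
      (AddSubgroup.closure {z : M | ∃ g y, z = ρ g y - y} = ⊤) → ∀ x : M, x = 0 := by
  intro k
  induction k using Nat.strong_induction_on with
  | _ k ih =>
    intro M _ hMk hpow ρ hcl x
    obtain ⟨m, hm⟩ := hpow
    haveI : Finite M :=
      Nat.finite_of_card_ne_zero (by rw [hMk, hm]; exact pow_ne_zero m hp.pos.ne')
    rcases Nat.eq_zero_or_pos m with hm0 | hmpos
    · have h1 : Nat.card M = 1 := by rw [hMk, hm, hm0, pow_zero]
      haveI := (Nat.card_eq_one_iff_unique.mp h1).1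
      exact Subsingleton.elim x 0
    · letI : MulAction G M := MulAction.compHom M ρ
      have hsmul : ∀ (g : G) (y : M), g • y = ρ g y := fun _ _ => rfl
      let F : AddSubgroup M :=
        { carrier := {y | ∀ g : G, ρ g y = y}
          zero_mem' := fun g => map_zero (ρ g)
          add_mem' := by intro a b ha hb g; rw [map_add, ha g, hb g]
          neg_mem' := by intro a ha g; rw [map_neg, ha g] }
      haveI : Fact p.Prime := ⟨hp⟩
      have hFmem : ∀ y : M, y ∈ F ↔ ∀ g : G, ρ g y = y := fun _ => Iff.rfl
      have hfix : Nat.card M ≡ Nat.card (MulAction.fixedPoints G M) [MOD p] :=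
        hG.card_modEq_card_fixedPoints M
      have hFeq : Nat.card (MulAction.fixedPoints G M) = Nat.card F := by
        apply Nat.card_congr
        apply Equiv.setCongr
        ext y
        simp only [MulAction.mem_fixedPoints]
        constructor
        · intro h; exact fun g => h g
        · intro h g; exact h g
      have hdvdM : p ∣ Nat.card M := by
        rw [hMk, hm]
        exact dvd_pow_self p hmpos.ne'
      have hpF : p ∣ Nat.card F := by
        have h1 : Nat.card M % p = Nat.card F % p := by
          have h := hfix
          rw [hFeq] at h
          exact h
        have h2 : Nat.card M % p = 0 := Nat.mod_eq_zero_of_dvd hdvdM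
        exact Nat.dvd_of_mod_eq_zero (by rw [← h1]; exact h2)
      haveI : Nonempty ↥F := ⟨0⟩
      have hFpos : 0 < Nat.card F := Nat.card_pos
      have hF1 : 1 < Nat.card F := lt_of_lt_of_le hp.one_lt (Nat.le_of_dvd hFpos hpF)
      have hcardM : Nat.card M = Nat.card (M ⧸ F) * Nat.card F :=
        AddSubgroup.card_eq_card_quotient_mul_card_addSubgroup F
      haveI : Nonempty (M ⧸ F) := ⟨0⟩
      have hQpos : 0 < Nat.card (M ⧸ F) := Nat.card_pos
      have hQlt : Nat.card (M ⧸ F) < k := by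
        rw [← hMk]
        calc Nat.card (M ⧸ F) = Nat.card (M ⧸ F) * 1 := (mul_one _).symm
          _ < Nat.card (M ⧸ F) * Nat.card F := mul_lt_mul_of_pos_left hF1 hQpos
          _ = Nat.card M := hcardM.symm
      have hQpow : ∃ m', Nat.card (M ⧸ F) = p ^ m' := by
        have hdvd : Nat.card (M ⧸ F) ∣ p ^ m := by
          rw [← hm, ← hMk]
          exact ⟨Nat.card F, hcardM⟩
        obtain ⟨k', _, hk'⟩ := (Nat.dvd_prime_pow hp).mp hdvd
        exact ⟨k', hk'⟩
      have hFle : ∀ g : G, F ≤ F.comap (ρ g : M ≃+ M).toAddMonoidHom := by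
        intro g y hy
        simp only [AddSubgroup.mem_comap]
        show ∀ g' : G, ρ g' ((ρ g : M ≃+ M) y) = (ρ g : M ≃+ M) y
        intro g'
        have h1 : (ρ g : M ≃+ M) y = y := hy g
        rw [h1]
        exact hy g'
      let θ : G → (M ⧸ F) →+ (M ⧸ F) := fun g =>
        QuotientAddGroup.map F F (ρ g : M ≃+ M).toAddMonoidHom (hFle g)
      have θmk : ∀ (g : G) (z : M),
          θ g (QuotientAddGroup.mk z) = QuotientAddGroup.mk (ρ g z) := by
        intro g z
        exact QuotientAddGroup.map_mk F F _ _ z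
      have θcomp : ∀ (g₁ g₂ : G) (q : M ⧸ F), θ g₁ (θ g₂ q) = θ (g₁ * g₂) q := by
        intro g₁ g₂ q
        refine QuotientAddGroup.induction_on q ?_
        intro z
        rw [θmk, θmk, θmk, map_mul, AddAutM.mul_apply]
      have θone : ∀ q : M ⧸ F, θ 1 q = q := by
        intro q
        refine QuotientAddGroup.induction_on q ?_
        intro z
        rw [θmk, map_one]
        rfl
      let ρ' : G →* AddAutM (M ⧸ F) := MonoidHom.mk' (fun g =>
        { toFun := θ g
          invFun := θ g⁻¹
          left_inv := fun q => by rw [θcomp, inv_mul_cancel, θone]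
          right_inv := fun q => by rw [θcomp, mul_inv_cancel, θone]
          map_add' := map_add (θ g) })
        (fun g₁ g₂ => AddEquiv.ext fun q => (θcomp g₁ g₂ q).symm)
      have hρ'mk : ∀ (g : G) (z : M),
          ρ' g (QuotientAddGroup.mk z) = QuotientAddGroup.mk (ρ g z) := θmk
      have hcl' : AddSubgroup.closure {z : M ⧸ F | ∃ g y, z = ρ' g y - y} = ⊤ := by
        rw [eq_top_iff]
        have hmap : AddSubgroup.map (QuotientAddGroup.mk' F)
            (AddSubgroup.closure {z : M | ∃ g y, z = ρ g y - y}) = ⊤ := by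
          rw [hcl]
          exact AddSubgroup.map_top_of_surjective _ (QuotientAddGroup.mk'_surjective F)
        rw [AddMonoidHom.map_closure] at hmap
        rw [← hmap]
        refine AddSubgroup.closure_mono ?_
        rintro z ⟨w, ⟨g, y, rfl⟩, rfl⟩
        refine ⟨g, QuotientAddGroup.mk y, ?_⟩
        rw [map_sub, hρ'mk]
        rfl
      have hall := ih (Nat.card (M ⧸ F)) hQlt (M ⧸ F) rfl hQpow ρ' hcl'
      have hFtop : ∀ y : M, y ∈ F := by
        intro y
        have h0 : (QuotientAddGroup.mk y : M ⧸ F) = 0 := hall _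
        exact (QuotientAddGroup.eq_zero_iff y).mp h0
      have hbotle : (⊤ : AddSubgroup M) ≤ ⊥ := by
        rw [← hcl]
        refine (AddSubgroup.closure_le _).2 ?_
        rintro z ⟨g, y, rfl⟩
        have h1 : ρ g y = y := (hFtop y) g
        simp [h1]
      exact (AddSubgroup.mem_bot).mp (hbotle (AddSubgroup.mem_top x))

end StmtOne
namespace StmtOne
open Finset AddSubgroup

/-- Type synonym carrying the multiplicative (circle) group of the brace. -/
def CGrp {A : Type u} [AddCommGroup A] (_B : LeftBrace A) : Type u := A

variable {A : Type u} [AddCommGroup A] {B : LeftBrace A}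

instance : Mul (CGrp B) := ⟨B.circ⟩
instance : One (CGrp B) := ⟨B.one⟩
instance : Inv (CGrp B) := ⟨B.inv⟩
instance : Group (CGrp B) :=
  Group.ofLeftAxioms B.circ_assoc B.one_circ B.inv_circ

theorem cgrp_mul (g h : CGrp B) : g * h = B.circ g h := rfl

variable (B)

theorem chain_succ_bot {i : ℕ} (h : braceChainAux B i = ⊥) :
    braceChainAux B (i + 1) = ⊥ := by
  rw [eq_bot_iff]
  show AddSubgroup.closure _ ≤ ⊥
  refine (AddSubgroup.closure_le _).2 ?_
  rintro z ⟨x, y, hy, rfl⟩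
  rw [h, AddSubgroup.mem_bot] at hy
  subst hy
  rw [star_zero_right]
  simp

theorem stable_bot {p n : ℕ} (hp : p.Prime) (hcard : Nat.card A = p ^ n)
    {I : AddSubgroup A} (hinv : ∀ g : A, ∀ x ∈ I, lamH B g x ∈ I)
    (hst : AddSubgroup.closure {z : A | ∃ x : A, ∃ y ∈ I, z = B.star x y} = I) :
    I = ⊥ := by
  haveI : Finite A :=
    Nat.finite_of_card_ne_zero (by rw [hcard]; exact pow_ne_zero n hp.pos.ne')
  let θ : A → ↥I →+ ↥I := fun g =>
    { toFun := fun y => ⟨lamH B g y.1, hinv g y.1 y.2⟩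
      map_zero' := Subtype.ext (map_zero (lamH B g))
      map_add' := fun y z => Subtype.ext (map_add (lamH B g) _ _) }
  have θcomp : ∀ g h y, θ g (θ h y) = θ (B.circ g h) y := fun g h y =>
    Subtype.ext (lamH_comp B g h y.1)
  have θone : ∀ y, θ B.one y = y := fun y => Subtype.ext (lamH_one B y.1)
  let ρ : CGrp B →* AddAutM ↥I := MonoidHom.mk' (fun g =>
    { toFun := θ g
      invFun := θ (B.inv g)
      left_inv := fun y => (θcomp (B.inv g) g y).trans ((congrArg (fun z => θ z y) (B.inv_circ g)).trans (θone y))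
      right_inv := fun y => (θcomp g (B.inv g) y).trans ((congrArg (fun z => θ z y) (circ_inv_right B g)).trans (θone y))
      map_add' := map_add (θ g) })
    (fun g₁ g₂ => AddEquiv.ext fun y => (θcomp g₁ g₂ y).symm)
  have hG : IsPGroup p (CGrp B) := IsPGroup.of_card (n := n) hcard
  have hcardtop : Nat.card (⊤ : AddSubgroup A) = p ^ n := by
    rw [← hcard]
    exact Nat.card_congr AddSubgroup.topEquiv.toEquiv
  obtain ⟨mI, _, hmI⟩ := (Nat.dvd_prime_pow hp).mp
    (hcardtop ▸ AddSubgroup.card_dvd_of_le (le_top : I ≤ ⊤))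
  have hclosI : AddSubgroup.closure {z : ↥I | ∃ g y, z = ρ g y - y} = ⊤ := by
    rw [eq_top_iff]
    rintro ⟨v, hv⟩ -
    have hv' : v ∈ AddSubgroup.closure {z : A | ∃ x : A, ∃ y ∈ I, z = B.star x y} := by
      rw [hst]; exact hv
    refine AddSubgroup.closure_induction
      (p := fun w _ => ∀ hwI : w ∈ I,
        (⟨w, hwI⟩ : ↥I) ∈ AddSubgroup.closure {z : ↥I | ∃ g y, z = ρ g y - y})
      ?_ ?_ ?_ ?_ hv' hv
    · rintro w ⟨x, y, hy, rfl⟩ hwI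
      refine AddSubgroup.subset_closure ⟨x, ⟨y, hy⟩, ?_⟩
      exact Subtype.ext (star_eq B x y)
    · intro h0
      have : (⟨0, h0⟩ : ↥I) = 0 := Subtype.ext rfl
      rw [this]
      exact zero_mem _
    · intro w₁ w₂ h1 h2 ih1 ih2 hwI
      have hw1 : w₁ ∈ I := by rw [← hst]; exact h1
      have hw2 : w₂ ∈ I := by rw [← hst]; exact h2
      have : (⟨w₁ + w₂, hwI⟩ : ↥I) = ⟨w₁, hw1⟩ + ⟨w₂, hw2⟩ := Subtype.ext rfl
      rw [this]
      exact add_mem (ih1 hw1) (ih2 hw2)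
    · intro w h1 ih1 hwI
      have hw1 : w ∈ I := by rw [← hst]; exact h1
      have : (⟨-w, hwI⟩ : ↥I) = -⟨w, hw1⟩ := Subtype.ext rfl
      rw [this]
      exact neg_mem (ih1 hw1)
  have hall := nakayama hp hG (Nat.card ↥I) ↥I rfl ⟨mI, hmI⟩ ρ hclosI
  rw [eq_bot_iff]
  intro v hv
  have h0 := hall ⟨v, hv⟩
  rw [AddSubgroup.mem_bot]
  exact congrArg Subtype.val h0

theorem chain_bot {p n : ℕ} (hp : p.Prime) (hcard : Nat.card A = p ^ n) :
    braceChainAux B n = ⊥ := by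
  haveI : Finite A :=
    Nat.finite_of_card_ne_zero (by rw [hcard]; exact pow_ne_zero n hp.pos.ne')
  have hcardtop : Nat.card (⊤ : AddSubgroup A) = p ^ n := by
    rw [← hcard]
    exact Nat.card_congr AddSubgroup.topEquiv.toEquiv
  have hdvd : ∀ i, Nat.card (braceChainAux B i) ∣ p ^ n := fun i =>
    hcardtop ▸ AddSubgroup.card_dvd_of_le (le_top : braceChainAux B i ≤ ⊤)
  have hstep : ∀ i, braceChainAux B i = ⊥ ∨
      Nat.card (braceChainAux B (i+1)) < Nat.card (braceChainAux B i) := by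
    intro i
    rcases lt_or_ge (Nat.card (braceChainAux B (i+1))) (Nat.card (braceChainAux B i))
      with h | h
    · exact Or.inr h
    · left
      have heq : braceChainAux B (i+1) = braceChainAux B i :=
        AddSubgroup.eq_of_le_of_card_ge (chain_succ_le B i) h
      refine stable_bot B hp hcard (fun g x hx => lamH_mem_chain B g hx) ?_
      exact heq
  have hbound : ∀ i, braceChainAux B i = ⊥ ∨
      Nat.card (braceChainAux B i) * p ^ i ≤ p ^ n := by
    intro i
    induction i with
    | zero =>
      right
      have h0 : Nat.card (braceChainAux B 0) = p ^ n := hcardtop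
      rw [h0, pow_zero, mul_one]
    | succ i ihy =>
      rcases ihy with hb | hle
      · exact Or.inl (chain_succ_bot B hb)
      · rcases hstep i with hb | hlt
        · exact Or.inl (chain_succ_bot B hb)
        · right
          obtain ⟨ai, _, hai⟩ := (Nat.dvd_prime_pow hp).mp (hdvd i)
          obtain ⟨bi, _, hbi⟩ := (Nat.dvd_prime_pow hp).mp (hdvd (i+1))
          rw [hai, hbi] at hlt
          have hba : bi < ai := (Nat.pow_lt_pow_iff_right hp.one_lt).mp hlt
          rw [hai] at hle
          rw [hbi]
          calc p ^ bi * p ^ (i+1) = p ^ (bi + (i+1)) := (pow_add p bi (i+1)).symm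
            _ ≤ p ^ (ai + i) := Nat.pow_le_pow_right hp.pos (by omega)
            _ = p ^ ai * p ^ i := pow_add p ai i
            _ ≤ p ^ n := hle
  rcases hbound n with h | h
  · exact h
  · haveI : Nonempty ↥(braceChainAux B n) := ⟨0⟩
    have hpos : 0 < Nat.card (braceChainAux B n) := Nat.card_pos
    have hle1 : Nat.card (braceChainAux B n) ≤ 1 := by
      have hp0 : 0 < p ^ n := pow_pos hp.pos n
      have h' : Nat.card (braceChainAux B n) * p ^ n ≤ 1 * p ^ n := by
        rw [one_mul]; exact h
      exact Nat.le_of_mul_le_mul_right h' hp0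
    exact AddSubgroup.card_eq_one.mp (le_antisymm hle1 hpos)

end StmtOne

/-- the pre-Lie ring `(A/ann(p²),+,•)` is left nilpotent:
`[b₁]•([b₂]•(⋯([bₙ]•[b_{n+1}])⋯)) = 0` for all `b₁,…,b_{n+1} ∈ A`. -/
theorem stmt_1 (p n : ℕ) (hp : p.Prime) (hn : n < p - 1)
    (A : Type u) [AddCommGroup A] (B : LeftBrace A) (hcard : Nat.card A = p ^ n)
    (γ : ℕ)
    (hγ : ∀ u : (ZMod (p ^ p))ˣ, ∃ k : ℕ, (γ : ZMod (p ^ p)) ^ k = (u : ZMod (p ^ p)))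
    (odot bullet :
      (A ⧸ annSub A (p ^ 2)) → (A ⧸ annSub A (p ^ 2)) → (A ⧸ annSub A (p ^ 2)))
    (hodot : ∀ a b c : A, p • c = B.star (p • a) b →
      odot (qmk (p ^ 2) a) (qmk (p ^ 2) b) = qmk (p ^ 2) c)
    (hbull : ∀ x y : A, bullet (qmk (p ^ 2) x) (qmk (p ^ 2) y) =
      ∑ i ∈ Finset.range (p - 1), (γ ^ (p ^ (p - 1))) ^ (p - 1 - i) •
        odot (qmk (p ^ 2) ((γ ^ (p ^ (p - 1))) ^ i • x)) (qmk (p ^ 2) y)) :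
    ∀ b : ℕ → A,
      leftProd bullet ((List.range n).map fun i => qmk (p ^ 2) (b i)) (qmk (p ^ 2) (b n))
        = 0 := by
  intro b
  have hbot : braceChainAux B n = ⊥ := StmtOne.chain_bot B hp hcard
  have main : ∀ (l : List A) (j : ℕ) (c : A), c ∈ braceChainAux B j →
      ∃ c' ∈ braceChainAux B (j + l.length),
        leftProd bullet (l.map (qmk (p ^ 2))) (qmk (p ^ 2) c) = qmk (p ^ 2) c' := by
    intro l
    induction l with
    | nil =>
      intro j c hc
      exact ⟨c, hc, rfl⟩
    | cons x l ihl =>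
      intro j c hc
      obtain ⟨c', hc', hrest⟩ := ihl j c hc
      have hstep : ∀ i : ℕ, ∃ ci ∈ braceChainAux B (j + l.length + 1),
          p • ci = B.star (p • ((γ ^ (p ^ (p - 1))) ^ i • x)) c' := by
        intro i
        obtain ⟨ci, hci, he⟩ := StmtOne.key_div B hp hn hbot n 0 (by omega)
          ((γ ^ (p ^ (p - 1))) ^ i • x) (AddSubgroup.mem_top _) (j + l.length) c' hc'
        exact ⟨ci, hci, he.symm⟩
      choose cf hcf hcfe using hstep
      refine ⟨∑ i ∈ Finset.range (p - 1), (γ ^ (p ^ (p - 1))) ^ (p - 1 - i) • cf i,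
        AddSubgroup.sum_mem _ (fun i _ => AddSubgroup.nsmul_mem _ (hcf i) _), ?_⟩
      show bullet (qmk (p ^ 2) x)
          (leftProd bullet (l.map (qmk (p ^ 2))) (qmk (p ^ 2) c)) = _
      rw [hrest, hbull x c']
      have hterm : ∀ i ∈ Finset.range (p - 1), (γ ^ (p ^ (p - 1))) ^ (p - 1 - i) •
          odot (qmk (p ^ 2) ((γ ^ (p ^ (p - 1))) ^ i • x)) (qmk (p ^ 2) c')
          = (γ ^ (p ^ (p - 1))) ^ (p - 1 - i) • qmk (p ^ 2) (cf i) := by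
        intro i _
        rw [hodot _ _ _ (hcfe i)]
      rw [Finset.sum_congr rfl hterm]
      have hpush : qmk (p ^ 2)
          (∑ i ∈ Finset.range (p - 1), (γ ^ (p ^ (p - 1))) ^ (p - 1 - i) • cf i)
          = ∑ i ∈ Finset.range (p - 1), (γ ^ (p ^ (p - 1))) ^ (p - 1 - i) •
              qmk (p ^ 2) (cf i) := by
        show (QuotientAddGroup.mk' (annSub A (p ^ 2)))
            (∑ i ∈ Finset.range (p - 1), (γ ^ (p ^ (p - 1))) ^ (p - 1 - i) • cf i) = _
        rw [map_sum]
        refine Finset.sum_congr rfl fun i _ => ?_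
        rw [map_nsmul]
        rfl
      rw [hpush]
  obtain ⟨c', hc', heq⟩ := main ((List.range n).map b) 0 (b n) (AddSubgroup.mem_top _)
  have hlen : ((List.range n).map b).length = n := by
    rw [List.length_map, List.length_range]
  rw [hlen] at hc'
  rw [Nat.zero_add, hbot, AddSubgroup.mem_bot] at hc'
  subst hc'
  have hmaps : ((List.range n).map b).map (qmk (p ^ 2))
      = (List.range n).map fun i => qmk (p ^ 2) (b i) := by
    rw [List.map_map]
    rfl
  rw [hmaps] at heq
  rw [heq]
  exact QuotientAddGroup.mk_zero _
end

section
/- Let p be a prime number and (A,+,∘) a left brace of cardinality p^n with p > n+1. Then for all a,b ∈ A the element (p·a)*b lies in pA, and the rule [a]⊙[b] := [℘^{-1}((p·a)*b)] is a well-defined binary operation on A/ann(p^2): if a−a′ ∈ ann(p^2), b−b′ ∈ ann(p^2), and c, c′ ∈ A satisfy p·c = (p·a)*b and p·c′ = (p·a′)*b′, then c−c′ ∈ ann(p^2). -/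
universe u

namespace BraceAux

variable {A : Type u} [AddCommGroup A] (B : LeftBrace A)

lemma circ_zero (a : A) : B.circ a 0 = a := by
  have h := B.circ_add a 0 0
  rw [add_zero] at h
  exact (add_left_cancel h.symm)

lemma one_eq_zero : B.one = 0 := by
  have h1 := circ_zero B B.one
  have h2 := B.one_circ 0
  rw [h2] at h1; exact h1.symm

/-- λ_a as an additive homomorphism. -/
def lamHom (a : A) : A →+ A :=
  AddMonoidHom.mk' (fun b => B.circ a b - a) (by
    intro b c
    have h : B.circ a (b + c) = B.circ a b + B.circ a c - a := by
      rw [← B.circ_add a b c]; abel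
    simp only [h]; abel)

lemma lam_apply (a b : A) : lamHom B a b = B.circ a b - a := rfl

lemma circ_eq (a b : A) : B.circ a b = a + lamHom B a b := by
  rw [lam_apply]; abel

lemma lam_comp (a b c : A) :
    lamHom B (B.circ a b) c = lamHom B a (lamHom B b c) := by
  have h := B.circ_add a (B.circ b c - b) b
  rw [sub_add_cancel] at h
  have h2 : B.circ a (B.circ b c - b) = B.circ a (B.circ b c) + a - B.circ a b := by
    rw [eq_sub_iff_add_eq]; exact h.symm
  simp only [lam_apply, B.circ_assoc, h2]
  abel

lemma lam_zero_apply (b : A) : lamHom B 0 b = b := by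
  rw [lam_apply]
  have : B.circ 0 b = b := by rw [← one_eq_zero B]; exact B.one_circ b
  rw [this, sub_zero]

/-- The multiplicative group of the brace. -/
structure Circ (B : LeftBrace A) where
  val : A

instance : Mul (Circ B) := ⟨fun x y => ⟨B.circ x.val y.val⟩⟩
instance : One (Circ B) := ⟨⟨B.one⟩⟩
instance : Inv (Circ B) := ⟨fun x => ⟨B.inv x.val⟩⟩
instance : Group (Circ B) :=
  Group.ofLeftAxioms
    (fun a b c => congrArg Circ.mk (B.circ_assoc a.val b.val c.val))
    (fun a => congrArg Circ.mk (B.one_circ a.val))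
    (fun a => congrArg Circ.mk (B.inv_circ a.val))

lemma circ_inv_right (a : A) : B.circ a (B.inv a) = B.one := by
  have := mul_inv_cancel (⟨a⟩ : Circ B)
  exact congrArg Circ.val this

lemma lam_inv_left (a b : A) : lamHom B (B.inv a) (lamHom B a b) = b := by
  rw [← lam_comp, B.inv_circ, one_eq_zero B, lam_zero_apply]

lemma lam_inv_right (a b : A) : lamHom B a (lamHom B (B.inv a) b) = b := by
  rw [← lam_comp, circ_inv_right, one_eq_zero B, lam_zero_apply]

lemma star_eq (a b : A) : B.star a b = lamHom B a b - b := by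
  rw [LeftBrace.star, lam_apply]

/-- λ_a as element of the endomorphism ring. -/
def lamE (a : A) : AddMonoid.End A := lamHom B a

/-- μ_a = λ_a − 1 in the endomorphism ring. -/
def muE (a : A) : AddMonoid.End A := lamE B a - 1

lemma muE_apply (a b : A) : muE B a b = B.star a b := by
  show lamHom B a b - b = _
  rw [star_eq]

lemma lamE_circ (a b : A) : lamE B (B.circ a b) = lamE B a * lamE B b :=
  AddMonoidHom.ext fun c => lam_comp B a b c

lemma lamE_zero : lamE B 0 = 1 :=
  AddMonoidHom.ext fun b => lam_zero_apply B b

lemma lamE_eq (a : A) : lamE B a = 1 + muE B a := by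
  rw [muE]; abel

end BraceAux

namespace BraceAux
variable {A : Type u} [AddCommGroup A] (B : LeftBrace A)

def circPow (a : A) : ℕ → A
  | 0 => B.one
  | k + 1 => B.circ a (circPow a k)

def eSeq (a : A) : ℕ → A
  | 0 => a
  | i + 1 => B.star a (eSeq a i)

def braceChainAux : ℕ → AddSubgroup A
  | 0 => ⊤
  | i + 1 => AddSubgroup.closure {z : A | ∃ x : A, ∃ y ∈ braceChainAux i, z = B.star x y}

lemma star_mem_chain {y : A} {i : ℕ} (x : A) (hy : y ∈ braceChainAux B i) :
    B.star x y ∈ braceChainAux B (i + 1) :=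
  AddSubgroup.subset_closure ⟨x, y, hy, rfl⟩

lemma chain_succ_le (i : ℕ) : braceChainAux B (i + 1) ≤ braceChainAux B i := by
  induction i with
  | zero => exact le_top
  | succ i ih =>
    apply AddSubgroup.closure_le _ |>.mpr
    rintro z ⟨x, y, hy, rfl⟩
    exact star_mem_chain B x (ih hy)

lemma chain_le_of_le {i j : ℕ} (h : i ≤ j) : braceChainAux B j ≤ braceChainAux B i := by
  induction j with
  | zero =>
    have : i = 0 := Nat.le_zero.mp h
    subst this; exact le_rfl
  | succ j ih =>
    rcases Nat.lt_or_ge i (j+1) with hl | hl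
    · exact (chain_succ_le B j).trans (ih (Nat.lt_succ_iff.mp hl))
    · have : i = j + 1 := le_antisymm h hl
      subst this; exact le_rfl

lemma lam_mem_chain (x : A) {y : A} {i : ℕ} (hy : y ∈ braceChainAux B i) :
    lamHom B x y ∈ braceChainAux B i := by
  induction i generalizing y with
  | zero => exact AddSubgroup.mem_top _
  | succ i ih =>
    revert hy
    have hle : braceChainAux B (i+1) ≤
        AddSubgroup.comap (lamHom B x) (braceChainAux B (i+1)) := by
      apply AddSubgroup.closure_le _ |>.mpr
      rintro z ⟨w, y, hy, rfl⟩
      have h1 : lamHom B x (B.star w y) = B.star (B.circ x w) y - B.star x y := by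
        rw [star_eq, star_eq, star_eq, map_sub, ← lam_comp]
        abel
      show lamHom B x (B.star w y) ∈ braceChainAux B (i+1)
      rw [h1]
      exact sub_mem (star_mem_chain B _ hy) (star_mem_chain B _ hy)
    intro hy
    exact hle hy

lemma eSeq_mem_chain {v : A} {k : ℕ} (hv : v ∈ braceChainAux B k) (i : ℕ) :
    eSeq B v i ∈ braceChainAux B (k + i) := by
  induction i with
  | zero => exact hv
  | succ i ih => exact star_mem_chain B v ih

lemma muE_pow_mem (x b : A) (i : ℕ) : (muE B x ^ i) b ∈ braceChainAux B i := by
  induction i with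
  | zero => exact AddSubgroup.mem_top _
  | succ i ih =>
    rw [pow_succ']
    show muE B x ((muE B x ^ i) b) ∈ _
    rw [muE_apply]
    exact star_mem_chain B x ih

lemma circPow_sum (v : A) (m : ℕ) :
    circPow B v m = ∑ i ∈ Finset.range m, (m.choose (i+1)) • eSeq B v i := by
  induction m with
  | zero => simp [circPow, one_eq_zero]
  | succ m ih =>
    have step : circPow B v (m+1) = v + lamHom B v (circPow B v m) := by
      show B.circ v _ = _
      rw [circ_eq]
    have hterm : ∀ i : ℕ, lamHom B v ((m.choose (i+1)) • eSeq B v i)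
        = (m.choose (i+1)) • eSeq B v i + (m.choose (i+1)) • eSeq B v (i+1) := by
      intro i
      rw [map_nsmul, ← smul_add]
      congr 1
      have h2 : lamHom B v (eSeq B v i) = eSeq B v i + B.star v (eSeq B v i) := by
        rw [star_eq]; abel
      rw [h2]; rfl
    rw [step, ih, map_sum]
    simp only [hterm, Finset.sum_add_distrib]
    conv_rhs => rw [Finset.sum_range_succ' (fun i => ((m+1).choose (i+1)) • eSeq B v i) m]
    have hck : ∀ i : ℕ, (m+1).choose (i+1+1) = m.choose (i+1) + m.choose (i+2) :=
      fun i => Nat.choose_succ_succ m (i+1)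
    simp only [hck, add_smul, Finset.sum_add_distrib, Nat.choose_one_right]
    have hkey : (∑ i ∈ Finset.range m, (m.choose (i+2)) • eSeq B v (i+1)) + (m+1) • eSeq B v 0
        = (∑ i ∈ Finset.range m, (m.choose (i+1)) • eSeq B v i) + eSeq B v 0 := by
      rcases Nat.eq_zero_or_pos m with hm | hm
      · subst hm; simp
      · obtain ⟨m', rfl⟩ : ∃ m', m = m' + 1 := ⟨m - 1, by omega⟩
        rw [Finset.sum_range_succ (fun i => ((m'+1).choose (i+2)) • eSeq B v (i+1)) m',
           Finset.sum_range_succ' (fun i => ((m'+1).choose (i+1)) • eSeq B v i) m']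
        have hz : (m'+1).choose (m'+2) = 0 := Nat.choose_eq_zero_of_lt (by omega)
        rw [hz, Nat.choose_one_right, succ_nsmul]
        simp only [zero_smul, add_zero]
        abel
    have e0 : eSeq B v 0 = v := rfl
    rw [e0] at hkey
    have h01 : (m+1).choose (0+1) = m + 1 := Nat.choose_one_right _
    rw [h01, e0]
    conv_rhs => rw [add_assoc, hkey]
    abel

end BraceAux

universe v w

namespace BraceAux

variable {G : Type w} [Group G] {M : Type v} [AddCommGroup M] [DistribMulAction G M]
  (F : AddSubgroup M) (hF : ∀ (g : G) (y : M), y ∈ F → g • y ∈ F)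

def quotMapHom (g : G) : M ⧸ F →+ M ⧸ F :=
  QuotientAddGroup.map F F (DistribMulAction.toAddMonoidHom M g)
    (fun y hy => hF g y hy)

lemma quotMapHom_mk (g : G) (y : M) :
    quotMapHom F hF g (QuotientAddGroup.mk y) = QuotientAddGroup.mk (g • y) :=
  QuotientAddGroup.map_mk F F _ _ y

/-- Quotient action of `G` on `M ⧸ F` for an invariant subgroup `F`. -/
def quotAction : DistribMulAction G (M ⧸ F) where
  smul g q := quotMapHom F hF g q
  one_smul q := by
    refine QuotientAddGroup.induction_on q (fun y => ?_)
    show quotMapHom F hF 1 (QuotientAddGroup.mk y) = QuotientAddGroup.mk y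
    rw [quotMapHom_mk, one_smul]
  mul_smul g h q := by
    refine QuotientAddGroup.induction_on q (fun y => ?_)
    show quotMapHom F hF (g * h) (QuotientAddGroup.mk y)
        = quotMapHom F hF g (quotMapHom F hF h (QuotientAddGroup.mk y))
    rw [quotMapHom_mk, quotMapHom_mk, quotMapHom_mk, mul_smul]
  smul_zero g := map_zero (quotMapHom F hF g)
  smul_add g q r := map_add (quotMapHom F hF g) q r

theorem aug_ne_top (p : ℕ) (hp : p.Prime) (G : Type w) [Group G] (hG : IsPGroup p G) :
    ∀ (c : ℕ), ∀ (M : Type v) [AddCommGroup M] [DistribMulAction G M],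
    Nat.card M = c → (∃ m : ℕ, Nat.card M = p ^ m) → Nontrivial M →
    AddSubgroup.closure {z : M | ∃ (g : G) (y : M), z = g • y - y} ≠ ⊤ := by
  intro c
  induction c using Nat.strong_induction_on with
  | _ c IH =>
    intro M _ _ hc hpm hnt
    obtain ⟨m, hm⟩ := hpm
    haveI : Fact p.Prime := ⟨hp⟩
    haveI : Finite M := Nat.finite_of_card_ne_zero
      (by rw [hm]; exact (pow_pos hp.pos m).ne')
    -- fixed points subgroup
    set F : AddSubgroup M :=
      { carrier := MulAction.fixedPoints G M
        zero_mem' := fun g => smul_zero g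
        add_mem' := by
          intro a b ha hb g
          have := smul_add g a b
          rw [this, ha g, hb g]
        neg_mem' := by
          intro a ha g
          rw [smul_neg, ha g] } with hFdef
    have hmemF : ∀ y : M, y ∈ F ↔ ∀ g : G, g • y = y := fun y => Iff.rfl
    -- F is nontrivial
    have hpdvd : p ∣ Nat.card M := by
      rw [hm]
      refine dvd_pow_self p ?_
      rintro rfl
      rw [pow_zero] at hm
      exact (Finite.one_lt_card (α := M)).ne' hm
    obtain ⟨b, hbfix, hbne⟩ :=
      hG.exists_fixed_point_of_prime_dvd_card_of_fixed_point (α := M) hpdvd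
        (a := 0) (fun g => smul_zero g)
    by_cases hFtop : F = ⊤
    · -- trivial action
      intro htop
      obtain ⟨x, y, hxy⟩ := hnt
      have hsub : {z : M | ∃ (g : G) (y : M), z = g • y - y} ⊆ (⊥ : AddSubgroup M) := by
        rintro z ⟨g, y, rfl⟩
        have : y ∈ F := hFtop ▸ AddSubgroup.mem_top y
        rw [(hmemF y).mp this g, sub_self]
        exact AddSubgroup.zero_mem ⊥
      have hle : AddSubgroup.closure {z : M | ∃ (g : G) (y : M), z = g • y - y} ≤ ⊥ :=
        (AddSubgroup.closure_le _).mpr hsub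
      rw [htop] at hle
      have : x ∈ (⊥ : AddSubgroup M) := hle (AddSubgroup.mem_top x)
      have : y ∈ (⊥ : AddSubgroup M) := hle (AddSubgroup.mem_top y)
      apply hxy
      rw [AddSubgroup.mem_bot.mp ‹x ∈ _›, AddSubgroup.mem_bot.mp ‹y ∈ _›]
    · -- quotient by F
      have hFinv : ∀ (g : G) (y : M), y ∈ F → g • y ∈ F := by
        intro g y hy
        rw [hmemF] at hy ⊢
        intro g'
        rw [hy g, hy g']
      letI instQ : DistribMulAction G (M ⧸ F) := quotAction F hFinv
      have hmk_smul : ∀ (g : G) (y : M),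
          g • (QuotientAddGroup.mk y : M ⧸ F) = QuotientAddGroup.mk (g • y) :=
        fun g y => quotMapHom_mk F hFinv g y
      -- cardinalities
      have hFnt : Nontrivial F := ⟨⟨⟨b, hbfix⟩, 0, by
        intro h
        exact hbne.symm (congrArg Subtype.val h)⟩⟩
      have hcard_eq : Nat.card M = Nat.card (M ⧸ F) * Nat.card F :=
        AddSubgroup.card_eq_card_quotient_mul_card_addSubgroup F
      have hFgt : 1 < Nat.card F := Finite.one_lt_card
      have hQlt : Nat.card (M ⧸ F) < Nat.card M := by
        have hQpos : 0 < Nat.card (M ⧸ F) := Nat.card_pos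
        nlinarith [hcard_eq]
      have hQdvd : Nat.card (M ⧸ F) ∣ p ^ m := by
        rw [← hm, hcard_eq]; exact Dvd.intro _ rfl
      obtain ⟨k, _, hk⟩ := (Nat.dvd_prime_pow hp).mp hQdvd
      have hQnt : Nontrivial (M ⧸ F) := by
        obtain ⟨y, hy⟩ : ∃ y : M, y ∉ F := by
          by_contra hall
          push_neg at hall
          exact hFtop ((AddSubgroup.eq_top_iff' F).mpr hall)
        exact ⟨QuotientAddGroup.mk y, 0, by
          rw [Ne, QuotientAddGroup.eq_zero_iff]; exact hy⟩
      have hIH := IH (Nat.card (M ⧸ F)) (hc ▸ hQlt) (M ⧸ F) rfl ⟨k, hk⟩ hQnt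
      -- transfer
      intro htop
      apply hIH
      have hmapsur : (AddSubgroup.closure
          {z : M | ∃ (g : G) (y : M), z = g • y - y}).map
            (QuotientAddGroup.mk' F) = ⊤ := by
        rw [htop]
        exact AddSubgroup.map_top_of_surjective _ (QuotientAddGroup.mk'_surjective F)
      rw [AddMonoidHom.map_closure] at hmapsur
      refine top_unique ?_
      rw [← hmapsur]
      apply AddSubgroup.closure_mono
      rintro z ⟨w, ⟨g, y, rfl⟩, rfl⟩
      refine ⟨g, QuotientAddGroup.mk y, ?_⟩
      rw [hmk_smul]
      rfl

end BraceAux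
-- chain-bot layer (appended to main later)
namespace BraceAux
variable {A : Type u} [AddCommGroup A] (B : LeftBrace A)

noncomputable def circEquiv : Circ B ≃ A :=
  ⟨Circ.val, Circ.mk, fun _ => rfl, fun _ => rfl⟩

/-- Action of the circle group on an invariant subgroup via λ. -/
def chainAction (i : ℕ) : DistribMulAction (Circ B) ↥(braceChainAux B i) where
  smul g y := ⟨lamHom B g.val y.val, lam_mem_chain B g.val y.2⟩
  one_smul y := by
    apply Subtype.ext
    show lamHom B (B.one) y.val = y.val
    rw [one_eq_zero B, lam_zero_apply]
  mul_smul g h y := by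
    apply Subtype.ext
    exact lam_comp B g.val h.val y.val
  smul_zero g := by
    apply Subtype.ext
    show lamHom B g.val (0 : A) = 0
    exact map_zero _
  smul_add g y z := by
    apply Subtype.ext
    show lamHom B g.val (y.val + z.val) = lamHom B g.val y.val + lamHom B g.val z.val
    exact map_add _ _ _

lemma chain_card_dvd (p n : ℕ) (hp : p.Prime) (hcard : Nat.card A = p ^ n) :
    ∀ i : ℕ, Nat.card ↥(braceChainAux B i) ∣ p ^ (n - i) := by
  have hfin : Finite A := Nat.finite_of_card_ne_zero (by rw [hcard]; exact (pow_pos hp.pos n).ne')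
  have hGcard : Nat.card (Circ B) = p ^ n := by
    rw [Nat.card_congr (circEquiv B), hcard]
  have hG : IsPGroup p (Circ B) := IsPGroup.of_card hGcard
  intro i
  induction i with
  | zero =>
    show Nat.card ↥(⊤ : AddSubgroup A) ∣ p ^ (n - 0)
    rw [AddSubgroup.card_top, hcard]
    exact pow_dvd_pow p (by omega)
  | succ i ih =>
    by_cases hbot : braceChainAux B i = ⊥
    · have : braceChainAux B (i+1) = ⊥ :=
        le_bot_iff.mp (hbot ▸ chain_succ_le B i)
      rw [this, AddSubgroup.card_bot]
      exact one_dvd _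
    · set I := braceChainAux B i with hI
      letI := chainAction B i
      have hsmul_val : ∀ (g : Circ B) (y : ↥I), ((g • y : ↥I) : A) = lamHom B g.val y.val :=
        fun g y => rfl
      -- the augmentation subgroup
      set S : Set ↥I := {z : ↥I | ∃ (g : Circ B) (y : ↥I), z = g • y - y} with hS
      have hInt : Nontrivial ↥I := by
        rcases AddSubgroup.bot_or_exists_ne_zero I with h | ⟨x, hx, hxne⟩
        · exact absurd h hbot
        · exact ⟨⟨x, hx⟩, 0, by simp [Subtype.ext_iff, hxne]⟩
      have hIdvd : Nat.card ↥I ∣ p ^ n := hcard ▸ AddSubgroup.card_addSubgroup_dvd_card I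
      obtain ⟨mI, hmIle, hmI⟩ := (Nat.dvd_prime_pow hp).mp hIdvd
      have haug : AddSubgroup.closure S ≠ ⊤ :=
        aug_ne_top p hp (Circ B) hG (Nat.card ↥I) ↥I rfl ⟨mI, hmI⟩ hInt
      -- identify the next chain subgroup with the image of the closure
      have hmap : braceChainAux B (i+1) = (AddSubgroup.closure S).map I.subtype := by
        rw [AddMonoidHom.map_closure]
        show AddSubgroup.closure {z : A | ∃ x : A, ∃ y ∈ I, z = B.star x y} = _
        congr 1
        ext z
        constructor
        · rintro ⟨x, y, hy, rfl⟩
          refine ⟨(⟨x⟩ : Circ B) • (⟨y, hy⟩ : ↥I) - ⟨y, hy⟩, ⟨⟨x⟩, ⟨y, hy⟩, rfl⟩, ?_⟩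
          show (_ : A) = _
          rw [AddSubgroup.coe_subtype]
          push_cast [hsmul_val]
          rw [star_eq]
        · rintro ⟨w, ⟨g, y, rfl⟩, rfl⟩
          refine ⟨g.val, y.val, y.2, ?_⟩
          rw [AddSubgroup.coe_subtype]
          push_cast [hsmul_val]
          rw [star_eq]
      -- cardinalities
      have hcards : Nat.card ↥(braceChainAux B (i+1)) = Nat.card ↥(AddSubgroup.closure S) := by
        rw [hmap]
        exact (Nat.card_congr
          ((AddSubgroup.equivMapOfInjective _ _ I.subtype_injective).toEquiv)).symm
      have hdvdI : Nat.card ↥(AddSubgroup.closure S) ∣ Nat.card ↥I :=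
        AddSubgroup.card_addSubgroup_dvd_card _
      have hdvd2 : Nat.card ↥(AddSubgroup.closure S) ∣ p ^ (n - i) := hdvdI.trans ih
      obtain ⟨a, hale, ha⟩ := (Nat.dvd_prime_pow hp).mp hdvd2
      have hane : Nat.card ↥(AddSubgroup.closure S) ≠ Nat.card ↥I := by
        intro heq
        exact haug (AddSubgroup.eq_top_of_card_eq _ heq)
      have hlt : a < n - i := by
        rcases Nat.lt_or_ge a (n - i) with h | h
        · exact h
        · exfalso
          have haeq : a = n - i := le_antisymm hale h
          -- then closure S has card p^(n-i), but card I divides p^(n-i) and closure ≤ I-top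
          have h1 : Nat.card ↥I ∣ p ^ (n-i) := ih
          have h2 : Nat.card ↥(AddSubgroup.closure S) ∣ Nat.card ↥I := hdvdI
          have : Nat.card ↥I = p ^ (n - i) := by
            have := Nat.le_of_dvd (pow_pos hp.pos _) h1
            have h3 : p ^ (n-i) ≤ Nat.card ↥I := by
              rw [← haeq, ← ha]
              exact Nat.le_of_dvd Nat.card_pos h2
            omega
          exact hane (by rw [ha, haeq, this])
      rw [hcards, ha]
      exact pow_dvd_pow p (by omega)

lemma chain_bot (p n : ℕ) (hp : p.Prime) (hcard : Nat.card A = p ^ n)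
    {i : ℕ} (hi : n ≤ i) : braceChainAux B i = ⊥ := by
  have h := chain_card_dvd B p n hp hcard n
  rw [Nat.sub_self, pow_zero, Nat.dvd_one] at h
  have hbn : braceChainAux B n = ⊥ := AddSubgroup.eq_bot_of_card_eq _ h
  exact le_bot_iff.mp (hbn ▸ chain_le_of_le B hi)

end BraceAux
namespace BraceAux
variable {A : Type u} [AddCommGroup A] (B : LeftBrace A)

lemma star_smul_right (x : A) (s : ℕ) (y : A) :
    B.star x (s • y) = s • B.star x y := by
  simp only [star_eq, map_nsmul, smul_sub]

lemma star_zero_right (x : A) : B.star x 0 = 0 := by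
  rw [star_eq, map_zero, sub_zero]

lemma eSeq_ann (x : A) (s : ℕ) (hx : s • x = 0) (i : ℕ) : s • eSeq B x i = 0 := by
  induction i with
  | zero => exact hx
  | succ i ih =>
    show s • B.star x (eSeq B x i) = 0
    rw [← star_smul_right, ih, star_zero_right]

lemma lamE_circPow (v : A) (m : ℕ) : lamE B (circPow B v m) = (lamE B v) ^ m := by
  induction m with
  | zero =>
    show lamE B B.one = _
    rw [one_eq_zero B, lamE_zero, pow_zero]
  | succ m ih =>
    show lamE B (B.circ v (circPow B v m)) = _
    rw [lamE_circ, ih, pow_succ']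

lemma binom (v : A) (m : ℕ) :
    (lamE B v) ^ m = ∑ k ∈ Finset.range (m+1), (m.choose k) • (muE B v) ^ k := by
  have h1 : lamE B v = muE B v + 1 := by rw [lamE_eq]; abel
  rw [h1, (Commute.one_right (muE B v)).add_pow]
  refine Finset.sum_congr rfl (fun k _ => ?_)
  rw [one_pow, mul_one, nsmul_eq_mul, (Nat.cast_commute (m.choose k) ((muE B v)^k)).eq]

section Main
variable (p n : ℕ) (hp : p.Prime) (hpn : n + 1 < p) (hcard : Nat.card A = p ^ n)
include hp hpn hcard

lemma muE_pow_zero {i : ℕ} (hi : n ≤ i) (x : A) : (muE B x) ^ i = 0 := by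
  apply AddMonoidHom.ext
  intro b
  have := muE_pow_mem B x b i
  rw [chain_bot B p n hp hcard hi] at this
  rw [AddSubgroup.mem_bot] at this; exact this

lemma eSeq_zero {i : ℕ} (hi : n ≤ i) (v : A) : eSeq B v i = 0 := by
  have := eSeq_mem_chain B (show v ∈ braceChainAux B 0 from trivial) i
  rw [zero_add] at this
  rw [chain_bot B p n hp hcard hi] at this
  simpa using this

lemma pp_dvd_choose {s k : ℕ} (hk1 : 1 ≤ k) (hkp : k < p) : p ^ s ∣ (p ^ s).choose k := by
  rcases Nat.eq_zero_or_pos s with rfl | hs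
  · simp
  obtain ⟨k', rfl⟩ : ∃ k', k = k' + 1 := ⟨k - 1, by omega⟩
  have hps : p ^ s = (p ^ s - 1) + 1 := by
    have := pow_pos hp.pos s; omega
  have hmul := Nat.add_one_mul_choose_eq (p ^ s - 1) k'
  rw [← hps] at hmul
  have hdvd : p ^ s ∣ (p^s).choose (k'+1) * (k'+1) := ⟨_, hmul.symm⟩
  have hcop : Nat.Coprime (p ^ s) (k'+1) :=
    Nat.Coprime.pow_left s (hp.coprime_iff_not_dvd.mpr
      (fun hdl => Nat.lt_irrefl _ (Nat.lt_of_lt_of_le hkp (Nat.le_of_dvd (by omega) hdl))))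
  exact hcop.dvd_of_dvd_mul_right hdvd

lemma circPow_pp_zero (x : A) (hx : p ^ 2 • x = 0) : circPow B x (p ^ 2) = 0 := by
  rw [circPow_sum]
  refine Finset.sum_eq_zero (fun i _ => ?_)
  rcases Nat.lt_or_ge i n with hi | hi
  · have hdvd : p ^ 2 ∣ (p^2).choose (i+1) := pp_dvd_choose p n hp hpn hcard
      (by omega) (by omega)
    obtain ⟨q, hq⟩ := hdvd
    rw [hq, mul_comm, mul_smul, eSeq_ann B x (p^2) hx i, smul_zero]
  · rw [eSeq_zero B p n hp hpn hcard hi, smul_zero]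

/-- Key annihilator lemma: if `p² • x = 0` then `p² • (x * b) = 0` for all `b`. -/
lemma ann_star (x : A) (hx : p ^ 2 • x = 0) (b : A) : p ^ 2 • B.star x b = 0 := by
  rcases Nat.eq_zero_or_pos n with rfl | hn
  · have : Subsingleton A := by
      rw [pow_zero] at hcard
      exact (Nat.card_eq_one_iff_unique.mp hcard).1
    rw [Subsingleton.elim (B.star x b) 0, smul_zero]
  set μ := muE B x with hμ
  -- λ_x ^ (p²) = 1
  have h1 : (lamE B x) ^ (p^2) = 1 := by
    rw [← lamE_circPow, circPow_pp_zero B p n hp hpn hcard x hx, lamE_zero]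
  have h2 : ∑ k ∈ Finset.range (p^2), ((p^2).choose (k+1)) • μ ^ (k+1) = 0 := by
    have h3 := binom B x (p^2)
    rw [h1, Finset.sum_range_succ' (fun k => ((p^2).choose k) • μ ^ k)] at h3
    simpa using h3.symm
  have hnp : n ≤ p ^ 2 := by nlinarith [hp.two_le]
  have h4 : ∑ k ∈ Finset.range n, ((p^2).choose (k+1)) • μ ^ (k+1) = 0 := by
    rw [← h2]
    apply Finset.sum_subset (Finset.range_subset_range.mpr hnp)
    intro k _ hk
    rw [Finset.mem_range, not_lt] at hk
    rw [muE_pow_zero B p n hp hpn hcard (by omega) x, nsmul_zero]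
  -- rewrite with quotients
  set q : ℕ → ℕ := fun k => ((p^2).choose (k+1)) / p^2 with hqdef
  have hq : ∀ k < n, (p^2).choose (k+1) = p^2 * q k := by
    intro k hk
    exact (Nat.div_mul_cancel (pp_dvd_choose p n hp hpn hcard (by omega) (by omega))).symm.trans
      (mul_comm _ _)
  set W : AddMonoid.End A := ∑ k ∈ Finset.range n, (q k) • μ ^ k with hW
  have h5 : p ^ 2 • (μ * W) = 0 := by
    rw [← h4]
    rw [hW, Finset.mul_sum, show p ^ 2 • ∑ i ∈ Finset.range n, μ * q i • μ ^ i = ∑ i ∈ Finset.range n, p ^ 2 • (μ * q i • μ ^ i) from Finset.smul_sum]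
    refine Finset.sum_congr rfl (fun k hk => ?_)
    rw [Finset.mem_range] at hk
    rw [hq k hk, mul_smul_comm, ← pow_succ', smul_smul, mul_smul]
  -- W = 1 + N with N nilpotent
  obtain ⟨n', rfl⟩ : ∃ n', n = n' + 1 := ⟨n - 1, by omega⟩
  have hq0 : q 0 = 1 := by
    rw [hqdef]
    simp [Nat.choose_one_right, Nat.div_self (pow_pos hp.pos 2)]
  set N : AddMonoid.End A := ∑ k ∈ Finset.range n', (q (k+1)) • μ ^ (k+1) with hN
  have hWN : W = 1 + N := by
    rw [hW, hN, Finset.sum_range_succ' (fun k => (q k) • μ ^ k)]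
    simp [hq0, add_comm]
  have hcomm : Commute μ N := by
    apply Commute.sum_right
    intro k _
    exact ((Commute.refl μ).pow_right (k+1)).smul_right _
  have hNmu : N = μ * (∑ k ∈ Finset.range n', (q (k+1)) • μ ^ k) := by
    rw [hN, Finset.mul_sum]
    refine Finset.sum_congr rfl (fun k _ => ?_)
    rw [mul_smul_comm, ← pow_succ']
  have hTcomm : Commute μ (∑ k ∈ Finset.range n', (q (k+1)) • μ ^ k) := by
    apply Commute.sum_right
    intro k _
    exact ((Commute.refl μ).pow_right k).smul_right _
  have hNnil : IsNilpotent N := by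
    refine ⟨n' + 1, ?_⟩
    rw [hNmu, hTcomm.mul_pow, muE_pow_zero B p (n'+1) hp hpn hcard le_rfl x, zero_mul]
  obtain ⟨u, hu⟩ := hNnil.isUnit_one_add
  have h6 : p ^ 2 • μ = 0 := by
    have : μ = (μ * W) * ↑u⁻¹ := by
      rw [hWN, ← hu, mul_assoc, Units.mul_inv, mul_one]
    rw [this, ← smul_mul_assoc, h5, zero_mul]
  have h7 : (p ^ 2 • μ) b = p ^ 2 • (μ b) := rfl
  rw [← muE_apply, ← h7, h6]
  rfl

end Main
end BraceAux
namespace BraceAux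
section Main2
variable {A : Type u} [AddCommGroup A] (B : LeftBrace A)
lemma end_apply_add (f g : AddMonoid.End A) (z : A) : (f + g) z = f z + g z := rfl
lemma end_apply_smul (s : ℕ) (f : AddMonoid.End A) (z : A) : (s • f) z = s • f z := rfl
lemma end_apply_one (z : A) : (1 : AddMonoid.End A) z = z := rfl
lemma end_apply_mul (f g : AddMonoid.End A) (z : A) : (f * g) z = f (g z) := rfl

variable (p n : ℕ) (hp : p.Prime) (hpn : n + 1 < p) (hcard : Nat.card A = p ^ n)
include hp hpn hcard

lemma decomp : ∀ (j k : ℕ), n ≤ k + j → ∀ v ∈ braceChainAux B k,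
    ∃ Θ : AddMonoid.End A, lamE B (p • v) = 1 + p • Θ ∧
      (p ^ 2 • v = 0 → ∀ z : A, p ^ 2 • Θ z = 0) := by
  intro j
  induction j with
  | zero =>
    intro k hk v hv
    rw [add_zero] at hk
    rw [chain_bot B p n hp hcard hk] at hv
    rw [AddSubgroup.mem_bot] at hv
    subst hv
    exact ⟨0, by rw [smul_zero, lamE_zero, nsmul_zero, add_zero],
      fun _ z => by rw [show (0 : AddMonoid.End A) z = 0 from rfl, smul_zero]⟩
  | succ j IH =>
    intro k hk v hv
    -- circPow v p = p•v + p•w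
    have e1 : circPow B v p
        = (∑ i ∈ Finset.range (p-1), (p.choose (i+2)) • eSeq B v (i+1)) + p • v := by
      rw [circPow_sum]
      have h2 := Finset.sum_range_succ' (fun i => (p.choose (i+1)) • eSeq B v i) (p-1)
      rw [show p - 1 + 1 = p by omega] at h2
      rw [h2, Nat.choose_one_right]
      rfl
    set w : A := ∑ i ∈ Finset.range (p-1), ((p.choose (i+2)) / p) • eSeq B v (i+1) with hw
    have hSw : (∑ i ∈ Finset.range (p-1), (p.choose (i+2)) • eSeq B v (i+1)) = p • w := by
      rw [hw, Finset.smul_sum]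
      refine Finset.sum_congr rfl (fun i hi => ?_)
      rw [Finset.mem_range] at hi
      rcases Nat.lt_or_ge (i+2) p with h2 | h2
      · have hd := hp.dvd_choose_self (k := i+2) (by omega) h2
        rw [smul_smul, Nat.mul_div_cancel' hd]
      · have h3 : n ≤ i + 1 := by omega
        rw [eSeq_zero B p n hp hpn hcard h3 v, smul_zero, smul_zero, smul_zero]
    have hw_mem : w ∈ braceChainAux B (k+1) := by
      apply AddSubgroup.sum_mem
      intro i _
      apply AddSubgroup.nsmul_mem
      exact chain_le_of_le B (by omega) (eSeq_mem_chain B hv (i+1))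
    have hw_ann : p ^ 2 • v = 0 → p ^ 2 • w = 0 := by
      intro hv2
      rw [hw, Finset.smul_sum]
      refine Finset.sum_eq_zero (fun i _ => ?_)
      rw [smul_comm, eSeq_ann B v (p^2) hv2 (i+1), smul_zero]
    set X : A := circPow B v p with hX
    set u : A := lamHom B (B.inv X) (-w) with hu
    have hu_mem : u ∈ braceChainAux B (k+1) :=
      lam_mem_chain B _ (AddSubgroup.neg_mem _ hw_mem)
    have hu_ann : p ^ 2 • v = 0 → p ^ 2 • u = 0 := by
      intro hv2
      rw [hu, ← map_nsmul, smul_neg, hw_ann hv2, neg_zero, map_zero]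
    have hXu : B.circ X (p • u) = p • v := by
      rw [circ_eq]
      have hpu : p • u = lamHom B (B.inv X) (-(p • w)) := by
        rw [hu, ← map_nsmul, smul_neg]
      rw [hpu, lam_inv_right]
      rw [e1, hSw]
      abel
    have hlam : lamE B (p • v) = (lamE B v) ^ p * lamE B (p • u) := by
      rw [← hXu, lamE_circ, hX, lamE_circPow]
    -- (lamE v)^p = 1 + p•ρ
    set μ := muE B v with hμ
    set ρ : AddMonoid.End A :=
      ∑ k ∈ Finset.range p, ((p.choose (k+1)) / p) • μ ^ (k+1) with hρ
    have hbin : (lamE B v) ^ p = 1 + p • ρ := by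
      rw [binom, Finset.sum_range_succ' (fun k => (p.choose k) • μ ^ k)]
      simp only [Nat.choose_zero_right, pow_zero, one_smul]
      rw [add_comm]
      congr 1
      rw [hρ, show p • ∑ k ∈ Finset.range p, ((p.choose (k+1)) / p) • μ ^ (k+1) = ∑ k ∈ Finset.range p, p • (((p.choose (k+1)) / p) • μ ^ (k+1)) from Finset.smul_sum]
      refine Finset.sum_congr rfl (fun i hi => ?_)
      rw [Finset.mem_range] at hi
      rcases Nat.lt_or_ge (i+1) p with h2 | h2
      · have hd := hp.dvd_choose_self (k := i+1) (by omega) h2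
        rw [smul_smul, Nat.mul_div_cancel' hd]
      · have h3 : n ≤ i + 1 := by omega
        rw [muE_pow_zero B p n hp hpn hcard h3 v, nsmul_zero, nsmul_zero, nsmul_zero]
    have hρ_ann : p ^ 2 • v = 0 → ∀ z : A, p ^ 2 • ρ z = 0 := by
      intro hv2 z
      rw [hρ]
      have happ : (∑ k ∈ Finset.range p, ((p.choose (k+1)) / p) • μ ^ (k+1)) z
          = ∑ k ∈ Finset.range p, ((p.choose (k+1)) / p) • (μ ^ (k+1)) z := by
        refine (AddMonoidHom.finsetSum_apply _ _ _).trans ?_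
        rfl
      rw [happ, Finset.smul_sum]
      refine Finset.sum_eq_zero (fun i _ => ?_)
      rw [smul_comm]
      have hμz : (μ ^ (i+1)) z = B.star v ((μ ^ i) z) := by
        rw [pow_succ']
        rw [end_apply_mul (A:=A)]
        rw [hμ, muE_apply]
      rw [hμz, ann_star B p n hp hpn hcard v hv2, smul_zero]
    obtain ⟨Θu, hΘu, hΘu_ann⟩ := IH (k+1) (by omega) u hu_mem
    refine ⟨ρ + Θu + p • (ρ * Θu), ?_, ?_⟩
    · rw [hlam, hbin, hΘu]
      rw [mul_add, mul_one, add_mul, one_mul, smul_mul_assoc, mul_smul_comm, nsmul_add, nsmul_add]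
      abel
    · intro hv2 z
      have h1 := hρ_ann hv2
      have h2 := hΘu_ann (hu_ann hv2)
      rw [end_apply_add (A:=A), end_apply_add (A:=A)]
      rw [end_apply_smul (A:=A), end_apply_mul (A:=A)]
      rw [smul_add, smul_add, h1 z, h2 z, smul_comm, h1 (Θu z), smul_zero]
      simp

lemma star_p_eq (a : A) :
    ∃ Θ : AddMonoid.End A, (∀ z : A, B.star (p • a) z = p • Θ z) ∧
      (p ^ 2 • a = 0 → ∀ z : A, p ^ 2 • Θ z = 0) := by
  obtain ⟨Θ, hΘ, hann⟩ := decomp B p n hp hpn hcard n 0 (by omega) a trivial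
  refine ⟨Θ, fun z => ?_, hann⟩
  have happ := congrFun (congrArg (DFunLike.coe) hΘ) z
  have h2 : lamHom B (p • a) z = z + p • Θ z := happ
  rw [star_eq, h2]
  abel

end Main2
end BraceAux

open BraceAux in
/-- `(p·a)*b ∈ pA`, and `[a]⊙[b] = [℘⁻¹((p·a)*b)]` is well defined on
`A/ann(p²)`. -/
theorem stmt_2 (p n : ℕ) (hp : p.Prime) (hpn : n + 1 < p)
    (A : Type u) [AddCommGroup A] (B : LeftBrace A) (hcard : Nat.card A = p ^ n) :
    (∀ a b : A, ∃ c : A, p • c = B.star (p • a) b) ∧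
    (∀ a a' b b' c c' : A,
      a - a' ∈ annSub A (p ^ 2) → b - b' ∈ annSub A (p ^ 2) →
      p • c = B.star (p • a) b → p • c' = B.star (p • a') b' →
      c - c' ∈ annSub A (p ^ 2)) := by
  constructor
  · intro a b
    obtain ⟨Θ, hΘ, -⟩ := star_p_eq B p n hp hpn hcard a
    exact ⟨Θ b, (hΘ b).symm⟩
  · intro a a' b b' c c' ha hb hc hc'
    have ha2 : p ^ 2 • (a - a') = 0 := ha
    have hb2 : p ^ 2 • (b - b') = 0 := hb
    show p ^ 2 • (c - c') = 0
    have hpp : (p:ℕ)^2 = p * p := sq p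
    have hstar_sub : ∀ x y z : A, B.star x y - B.star x z = B.star x (y - z) := by
      intro x y z
      simp only [star_eq, map_sub]
      abel
    have hc2 : p ^ 2 • c = B.star (p • a) (p • b) := by
      rw [hpp, mul_smul, hc, ← star_smul_right]
    have hc2' : p ^ 2 • c' = B.star (p • a') (p • b') := by
      rw [hpp, mul_smul, hc', ← star_smul_right]
    -- step A
    have hA : B.star (p • a) (p • (b - b')) = 0 := by
      obtain ⟨Θ, hΘ, -⟩ := star_p_eq B p n hp hpn hcard a
      rw [hΘ, map_nsmul, smul_smul, ← hpp, ← map_nsmul Θ, hb2, map_zero]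
    -- step B
    have hB : B.star (p • a) (p • b') = B.star (p • a') (p • b') := by
      set e : A := lamHom B (B.inv (p • a')) (a - a') with he
      have he2 : p ^ 2 • e = 0 := by
        rw [he, ← map_nsmul, ha2, map_zero]
      have hpe : B.circ (p • a') (p • e) = p • a := by
        rw [circ_eq]
        have hpe2 : p • e = lamHom B (B.inv (p • a')) (p • (a - a')) := by
          rw [he, ← map_nsmul]
        rw [hpe2, lam_inv_right, smul_sub]
        abel
      have hlam2 : lamE B (p • a) = lamE B (p • a') * lamE B (p • e) := by
        rw [← hpe, lamE_circ]
      obtain ⟨Θe, hΘe, hanne⟩ := decomp B p n hp hpn hcard n 0 (by omega) e trivial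
      have hkey : lamHom B (p • e) (p • b') = p • b' := by
        have happ := congrFun (congrArg (DFunLike.coe) hΘe) (p • b')
        have h2 : lamHom B (p • e) (p • b') = p • b' + p • Θe (p • b') := happ
        rw [h2, map_nsmul, smul_smul, ← hpp, hanne he2 b', add_zero]
      have happ2 := congrFun (congrArg (DFunLike.coe) hlam2) (p • b')
      have h3 : lamHom B (p • a) (p • b') = lamHom B (p • a') (lamHom B (p • e) (p • b')) := happ2
      rw [star_eq, star_eq, h3, hkey]
    rw [smul_sub, hc2, hc2', ← hB, hstar_sub, ← smul_sub, hA]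
end

section
/- Let p be a prime number and (A,+,∘) a left brace of cardinality p^n with p > n+1, and let a ∈ A. Then p·f(a) = a^{∘p}. Moreover, there exist integers α_1, …, α_{p−1} which depend only on the additive group (A,+) (not on a and not on the brace multiplication), with α_1 = 1, such that [a] = Σ_{i=1}^{p−1} α_i·[f_i(a)] in A/ann(p^2), where [f_1(a)] = [f(a)] and [f_{i+1}(a)] = [f(a)]⊙[f_i(a)]. -/
universe u

namespace LeftBrace
variable {A : Type u} [AddCommGroup A] (B : LeftBrace A)

theorem circ_zero (a : A) : B.circ a 0 = a := by
  have h := B.circ_add a 0 0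
  rw [add_zero] at h
  exact (add_left_cancel h).symm

theorem one_eq_zero : B.one = 0 := by
  have h1 : B.circ B.one 0 = 0 := B.one_circ 0
  rw [B.circ_zero B.one] at h1; exact h1

theorem zero_circ (a : A) : B.circ 0 a = a := by
  have := B.one_circ a; rwa [B.one_eq_zero] at this

/-- `λ_a` as an additive endomorphism. -/
def lamE (a : A) : AddMonoid.End A where
  toFun x := B.circ a x - a
  map_zero' := by show B.circ a 0 - a = 0; rw [B.circ_zero]; exact sub_self a
  map_add' x y := by
    have h := B.circ_add a x y
    have h2 : B.circ a (x + y) = B.circ a x + B.circ a y - a := by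
      rw [← h]; abel
    show B.circ a (x + y) - a = (B.circ a x - a) + (B.circ a y - a)
    rw [h2]; abel

theorem lamE_apply (a x : A) : B.lamE a x = B.circ a x - a := rfl

theorem star_eq (a x : A) : B.star a x = B.lamE a x - x := by
  rw [LeftBrace.star, lamE_apply]

theorem lamE_zero : B.lamE 0 = 1 := by
  refine AddMonoidHom.ext fun x => ?_; show B.circ 0 x - 0 = x; rw [B.zero_circ, sub_zero]

theorem lamE_circ (a b : A) : B.lamE (B.circ a b) = B.lamE a * B.lamE b := by
  refine AddMonoidHom.ext fun x => ?_
  have hsub : ∀ u v : A, B.circ a (u - v) = B.circ a u - B.circ a v + a := by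
    intro u v
    have := map_sub (B.lamE a) u v
    rw [lamE_apply, lamE_apply, lamE_apply] at this
    have h2 : B.circ a (u - v) = (B.circ a u - a) - (B.circ a v - a) + a := by
      rw [← this]; abel
    rw [h2]; abel
  show B.circ (B.circ a b) x - B.circ a b = B.lamE a (B.lamE b x)
  rw [lamE_apply, lamE_apply, hsub, B.circ_assoc]; abel

/-- the operator `x ↦ a * x`. -/
def sE (a : A) : AddMonoid.End A := B.lamE a - 1

theorem sE_apply (a x : A) : B.sE a x = B.star a x := by
  show B.lamE a x - x = _
  rw [star_eq]

theorem star_mem_chain {i : ℕ} {y : A} (x : A) (hy : y ∈ braceChainAux B i) :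
    B.star x y ∈ braceChainAux B (i + 1) :=
  AddSubgroup.subset_closure ⟨x, y, hy, rfl⟩

theorem chain_star_closed : ∀ i : ℕ, ∀ x y : A, y ∈ braceChainAux B i →
    B.star x y ∈ braceChainAux B i := by
  intro i
  induction i with
  | zero => intro x y _; exact AddSubgroup.mem_top _
  | succ i ih =>
    intro x y hy
    refine AddSubgroup.closure_induction ?_ ?_ ?_ ?_ hy
    · rintro z ⟨u, v, hv, rfl⟩
      exact B.star_mem_chain x (ih u v hv)
    · have : B.star x 0 = 0 := by rw [← sE_apply]; exact (B.sE x).map_zero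
      rw [this]; exact zero_mem _
    · intro u v _ _ hu hv
      have : B.star x (u + v) = B.star x u + B.star x v := by
        rw [← sE_apply, ← sE_apply, ← sE_apply]; exact (B.sE x).map_add u v
      rw [this]; exact add_mem hu hv
    · intro u _ hu
      have : B.star x (-u) = -B.star x u := by
        rw [← sE_apply, ← sE_apply]; exact (B.sE x).map_neg u
      rw [this]; exact neg_mem hu

theorem chain_succ_le (i : ℕ) : braceChainAux B (i + 1) ≤ braceChainAux B i := by
  show AddSubgroup.closure _ ≤ _
  rw [AddSubgroup.closure_le]
  rintro z ⟨u, v, hv, rfl⟩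
  exact B.chain_star_closed i u v hv

theorem chain_le {i j : ℕ} (h : i ≤ j) : braceChainAux B j ≤ braceChainAux B i := by
  induction j with
  | zero => rw [Nat.le_zero.mp h]
  | succ j ih =>
    rcases Nat.lt_or_ge i (j+1) with hlt | hge
    · exact le_trans (B.chain_succ_le j) (ih (Nat.lt_succ_iff.mp hlt))
    · rw [Nat.le_antisymm h hge]

theorem sE_pow_mem (a x : A) (m : ℕ) : ((B.sE a) ^ m) x ∈ braceChainAux B m := by
  induction m with
  | zero => exact AddSubgroup.mem_top _
  | succ m ih =>
    have hp : (B.sE a) ^ (m + 1) = B.sE a * (B.sE a) ^ m := by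
      rw [pow_succ']
    rw [hp]
    show B.sE a (((B.sE a) ^ m) x) ∈ _
    rw [sE_apply]
    exact B.star_mem_chain a ih

end LeftBrace

/-- A finite `p`-group acting on a finite abelian `p`-group `M` such that the
displacements `φ g x - x` generate all of `M` forces `M = 0`. -/
theorem gen_aux (p : ℕ) (hp : p.Prime) :
    ∀ (N : ℕ) (M : Type u) [AddCommGroup M], ∀ (_ : Finite M) (_ : Nat.card M ≤ N)
      (_ : ∃ k, Nat.card M = p ^ k)
      (G : Type u) [Group G], ∀ (_ : IsPGroup p G) (φ : G →* AddMonoid.End M),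
      AddSubgroup.closure {z : M | ∃ g x, z = φ g x - x} = ⊤ → ∀ m : M, m = 0 := by
  haveI : Fact p.Prime := ⟨hp⟩
  intro N
  induction N with
  | zero =>
    intro M _ hfin hle ⟨k, hk⟩ G _ hG φ hcl m
    exfalso
    have h1 : 0 < Nat.card M := Nat.card_pos
    omega
  | succ N ih =>
    intro M instM hfin hle ⟨k, hk⟩ G instG hG φ hcl
    by_cases htriv : ∀ m : M, m = 0
    · exact htriv
    · -- M is nontrivial
      push_neg at htriv
      obtain ⟨m₁, hm₁⟩ := htriv
      haveI : Nontrivial M := ⟨⟨m₁, 0, hm₁⟩⟩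
      -- the action of G on M
      letI : SMul G M := ⟨fun g m => φ g m⟩
      letI : MulAction G M :=
        { one_smul := fun m => by show φ 1 m = m; rw [φ.map_one]; rfl
          mul_smul := fun g h m => by show φ (g * h) m = φ g (φ h m); rw [φ.map_mul]; rfl }
      -- fixed points form a nontrivial subgroup
      have hkpos : k ≠ 0 := by
        intro h0
        rw [h0, pow_zero] at hk
        exact (Finite.one_lt_card_iff_nontrivial).mpr ‹Nontrivial M› |>.ne' hk
      have hdvdM : p ∣ Nat.card M := by
        rw [hk]; exact dvd_pow_self p hkpos
      have hmod := hG.card_modEq_card_fixedPoints M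
      have hdvdF : p ∣ Nat.card (MulAction.fixedPoints G M) :=
        (Nat.modEq_zero_iff_dvd).mp ((hmod.symm).trans (Nat.modEq_zero_iff_dvd.mpr hdvdM))
      have hFbig : 1 < Nat.card (MulAction.fixedPoints G M) := by
        haveI : Finite (MulAction.fixedPoints G M) := Subtype.finite
        have h1 : 0 < Nat.card (MulAction.fixedPoints G M) := by
          have h0 : (0 : M) ∈ MulAction.fixedPoints G M := by
            intro g; show φ g 0 = 0; exact (φ g).map_zero
          haveI : Nonempty (MulAction.fixedPoints G M) := ⟨⟨0, h0⟩⟩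
          exact Nat.card_pos
        exact lt_of_lt_of_le hp.one_lt (Nat.le_of_dvd h1 hdvdF)
      haveI : Finite (MulAction.fixedPoints G M) := Subtype.finite
      obtain ⟨⟨x₁, hx₁⟩, ⟨x₂, hx₂⟩, hne⟩ :=
        (Finite.one_lt_card_iff_nontrivial).mp hFbig
      have hfix : ∃ m₀ : M, m₀ ≠ 0 ∧ ∀ g : G, φ g m₀ = m₀ := by
        by_cases h0 : x₁ = 0
        · refine ⟨x₂, ?_, hx₂⟩
          intro h; exact hne (by simp [Subtype.ext_iff, h0, h])
        · exact ⟨x₁, h0, hx₁⟩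
      obtain ⟨m₀, hm₀ne, hm₀fix⟩ := hfix
      -- the subgroup of fixed points
      let F : AddSubgroup M :=
        { carrier := {m : M | ∀ g : G, φ g m = m}
          zero_mem' := fun g => (φ g).map_zero
          add_mem' := fun {a b} ha hb g => by rw [map_add (φ g), ha g, hb g]
          neg_mem' := fun {a} ha g => by rw [map_neg (φ g), ha g] }
      have hm₀F : m₀ ∈ F := hm₀fix
      have hFle : ∀ g : G, F ≤ F.comap (φ g) := by
        intro g m hm
        have h2 : ∀ g' : G, φ g' (φ g m) = φ g m := fun g' => by rw [hm g, hm g']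
        exact h2
      -- the quotient action
      let ψ : G →* AddMonoid.End (M ⧸ F) :=
        { toFun := fun g => QuotientAddGroup.map F F (φ g) (hFle g)
          map_one' := by
            refine AddMonoidHom.ext fun x => ?_
            refine QuotientAddGroup.induction_on x fun m => ?_
            show (QuotientAddGroup.mk (φ 1 m) : M ⧸ F) = QuotientAddGroup.mk m
            rw [φ.map_one]
            rfl
          map_mul' := fun g h => by
            refine AddMonoidHom.ext fun x => ?_
            refine QuotientAddGroup.induction_on x fun m => ?_
            show _ = QuotientAddGroup.map F F (φ g) (hFle g)
              (QuotientAddGroup.map F F (φ h) (hFle h) (QuotientAddGroup.mk m))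
            show (QuotientAddGroup.mk (φ (g * h) m) : M ⧸ F) = QuotientAddGroup.mk (φ g (φ h m))
            rw [φ.map_mul]
            rfl }
      have hψmk : ∀ (g : G) (m : M),
          ψ g (QuotientAddGroup.mk m) = QuotientAddGroup.mk (φ g m) := fun g m =>
        QuotientAddGroup.map_mk F F (φ g) (hFle g) m
      -- cardinalities
      have hcard_eq : Nat.card M = Nat.card (M ⧸ F) * Nat.card F :=
        AddSubgroup.card_eq_card_quotient_mul_card_addSubgroup F
      have hFtwo : 2 ≤ Nat.card F := by
        haveI : Finite F := Subtype.finite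
        have : Nontrivial F := ⟨⟨⟨0, F.zero_mem⟩, ⟨m₀, hm₀F⟩, fun h => hm₀ne
          (by simpa [Subtype.ext_iff] using h.symm)⟩⟩
        exact Finite.one_lt_card_iff_nontrivial.mpr this
      have hQpos : 0 < Nat.card (M ⧸ F) := Nat.card_pos
      have hQlt : Nat.card (M ⧸ F) < Nat.card M := by
        calc Nat.card (M ⧸ F) < Nat.card (M ⧸ F) * 2 := by omega
        _ ≤ Nat.card (M ⧸ F) * Nat.card F := Nat.mul_le_mul_left _ hFtwo
        _ = Nat.card M := hcard_eq.symm
      have hQle : Nat.card (M ⧸ F) ≤ N := by omega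
      have hQdvd : Nat.card (M ⧸ F) ∣ p ^ k := by
        rw [← hk]; exact AddSubgroup.card_quotient_dvd_card F
      obtain ⟨k', _, hk'⟩ := (Nat.dvd_prime_pow hp).mp hQdvd
      -- closure condition descends
      have hclQ : AddSubgroup.closure {z : M ⧸ F | ∃ g x, z = ψ g x - x} = ⊤ := by
        rw [eq_top_iff]
        intro q _
        refine QuotientAddGroup.induction_on q fun m => ?_
        have hm : m ∈ AddSubgroup.closure {z : M | ∃ g x, z = φ g x - x} := by
          rw [hcl]; exact AddSubgroup.mem_top m
        refine AddSubgroup.closure_induction ?_ ?_ ?_ ?_ hm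
        · rintro z ⟨g, x, rfl⟩
          refine AddSubgroup.subset_closure ?_
          refine ⟨g, QuotientAddGroup.mk x, ?_⟩
          rw [hψmk]
          exact (QuotientAddGroup.mk' F).map_sub (φ g x) x
        · exact zero_mem _
        · intro u v _ _ hu hv
          have : ((QuotientAddGroup.mk (u + v) : M ⧸ F)) =
              QuotientAddGroup.mk u + QuotientAddGroup.mk v := rfl
          rw [this]; exact add_mem hu hv
        · intro u _ hu
          have : ((QuotientAddGroup.mk (-u) : M ⧸ F)) = -QuotientAddGroup.mk u := rfl
          rw [this]; exact neg_mem hu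
      -- apply the induction hypothesis
      haveI : Finite (M ⧸ F) := Quotient.finite _
      have hquotzero := ih (M ⧸ F) ‹Finite (M ⧸ F)› hQle ⟨k', hk'⟩ G hG ψ hclQ
      -- hence F = ⊤, so all displacements vanish
      have hallF : ∀ m : M, m ∈ F := by
        intro m
        have := hquotzero (QuotientAddGroup.mk m)
        exact (QuotientAddGroup.eq_zero_iff m).mp this
      have hgen0 : {z : M | ∃ g x, z = φ g x - x} ⊆ ((⊥ : AddSubgroup M) : Set M) := by
        rintro z ⟨g, x, rfl⟩
        have : φ g x = x := hallF x g
        simp [this]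
      have : (⊤ : AddSubgroup M) ≤ ⊥ := by
        rw [← hcl]
        exact (AddSubgroup.closure_le ⊥).mpr hgen0
      intro m
      exact (AddSubgroup.mem_bot).mp (this (AddSubgroup.mem_top m))

namespace LeftBrace
variable {A : Type u} [AddCommGroup A]

/-- If the chain stabilizes at `S`, then `S = ⊥`. -/
theorem chain_stab (p n : ℕ) (hp : p.Prime) (B : LeftBrace A) (hcard : Nat.card A = p ^ n)
    (S : AddSubgroup A)
    (hScl : AddSubgroup.closure {z : A | ∃ x : A, ∃ y ∈ S, z = B.star x y} = S) :
    S = ⊥ := by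
  haveI hfinA : Finite A := Nat.finite_of_card_ne_zero
    (by rw [hcard]; exact (pow_pos hp.pos n).ne')
  have hstar : ∀ x y : A, y ∈ S → B.star x y ∈ S := by
    intro x y hy
    rw [← hScl]
    exact AddSubgroup.subset_closure ⟨x, y, hy, rfl⟩
  have hSlam : ∀ (a : A), ∀ y, y ∈ S → B.lamE a y ∈ S := by
    intro a y hy
    have h1 : B.lamE a y = B.star a y + y := by rw [star_eq]; abel
    rw [h1]
    exact add_mem (hstar a y hy) hy
  -- the circle group structure on A
  letI instMul : Mul A := ⟨B.circ⟩
  letI instOne : One A := ⟨B.one⟩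
  letI instInv : Inv A := ⟨B.inv⟩
  letI instGroup : Group A := Group.ofLeftAxioms B.circ_assoc B.one_circ B.inv_circ
  have hG : IsPGroup p A := IsPGroup.of_card hcard
  -- the lambda action on S
  let φ₀ : A → AddMonoid.End ↥S := fun a =>
    { toFun := fun y => ⟨B.lamE a y, hSlam a y y.2⟩
      map_zero' := Subtype.ext (by simp)
      map_add' := fun y z => Subtype.ext (by
        show B.lamE a (↑y + ↑z) = B.lamE a ↑y + B.lamE a ↑z
        exact (B.lamE a).map_add y z) }
  have hφ₀ : ∀ (a : A) (y : ↥S), ((φ₀ a y : ↥S) : A) = B.lamE a (y : A) := fun a y => rfl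
  let φ : A →* AddMonoid.End ↥S :=
    { toFun := φ₀
      map_one' := by
        refine AddMonoidHom.ext fun y => Subtype.ext ?_
        show B.lamE (B.one) (y : A) = ((y : ↥S) : A)
        rw [B.one_eq_zero, B.lamE_zero]
        rfl
      map_mul' := fun a b => by
        refine AddMonoidHom.ext fun y => Subtype.ext ?_
        show B.lamE (B.circ a b) (y : A) = B.lamE a (B.lamE b (y : A))
        rw [B.lamE_circ]
        rfl }
  -- the closure condition on S
  have hmem : ∀ (y : A),
      y ∈ AddSubgroup.closure {z : A | ∃ x : A, ∃ v ∈ S, z = B.star x v} →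
      ∀ h : y ∈ S,
      (⟨y, h⟩ : ↥S) ∈ AddSubgroup.closure {z : ↥S | ∃ g x, z = φ g x - x} := by
    intro y hy'
    refine AddSubgroup.closure_induction
      (p := fun y _ => ∀ h : y ∈ S,
        (⟨y, h⟩ : ↥S) ∈ AddSubgroup.closure {z : ↥S | ∃ g x, z = φ g x - x})
      ?_ ?_ ?_ ?_ hy'
    · rintro z ⟨u, v, hv, rfl⟩ h
      refine AddSubgroup.subset_closure ⟨u, ⟨v, hv⟩, ?_⟩
      refine Subtype.ext ?_
      show B.star u v = B.lamE u v - v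
      rw [star_eq]
    · intro _
      have : (⟨(0 : A), _⟩ : ↥S) = 0 := Subtype.ext rfl
      rw [this]; exact zero_mem _
    · intro u v hu hv ihu ihv h
      have hu' : u ∈ S := by rw [← hScl]; exact hu
      have hv' : v ∈ S := by rw [← hScl]; exact hv
      have : (⟨u + v, h⟩ : ↥S) = ⟨u, hu'⟩ + ⟨v, hv'⟩ := Subtype.ext rfl
      rw [this]
      exact add_mem (ihu hu') (ihv hv')
    · intro u hu ihu h
      have hu' : u ∈ S := by rw [← hScl]; exact hu
      have : (⟨-u, h⟩ : ↥S) = -⟨u, hu'⟩ := Subtype.ext rfl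
      rw [this]
      exact neg_mem (ihu hu')
  have hcl : AddSubgroup.closure {z : ↥S | ∃ g x, z = φ g x - x} = ⊤ := by
    rw [eq_top_iff]
    rintro ⟨y, hy⟩ _
    exact hmem y (by rw [hScl]; exact hy) hy
  -- apply the general lemma
  have hdvd : Nat.card ↥S ∣ p ^ n := by
    rw [← hcard]; exact AddSubgroup.card_addSubgroup_dvd_card S
  obtain ⟨k, _, hk⟩ := (Nat.dvd_prime_pow hp).mp hdvd
  have hall := gen_aux p hp (Nat.card ↥S) (↥S) Subtype.finite le_rfl ⟨k, hk⟩ A hG φ hcl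
  rw [eq_bot_iff]
  intro y hy
  have := hall ⟨y, hy⟩
  rw [AddSubgroup.mem_bot]
  exact congrArg Subtype.val this

/-- The chain reaches `⊥` by step `n+1`. -/
theorem chain_bot (p n : ℕ) (hp : p.Prime) (B : LeftBrace A) (hcard : Nat.card A = p ^ n) :
    braceChainAux B (n + 1) = ⊥ := by
  haveI hfinA : Finite A := Nat.finite_of_card_ne_zero
    (by rw [hcard]; exact (pow_pos hp.pos n).ne')
  have key : ∀ i : ℕ, braceChainAux B i = ⊥ ∨
      ∃ k : ℕ, Nat.card ↥(braceChainAux B i) = p ^ k ∧ k + i ≤ n := by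
    intro i
    induction i with
    | zero =>
      right
      refine ⟨n, ?_, by omega⟩
      show Nat.card ↥(⊤ : AddSubgroup A) = p ^ n
      rw [AddSubgroup.card_top, hcard]
    | succ i ih =>
      rcases ih with hbot | ⟨k, hk, hki⟩
      · left
        rw [eq_bot_iff, ← hbot]
        exact B.chain_succ_le i
      · by_cases heq : braceChainAux B (i + 1) = braceChainAux B i
        · left
          have hSbot : braceChainAux B i = ⊥ :=
            chain_stab p n hp B hcard (braceChainAux B i) heq
          rw [eq_bot_iff, ← hSbot]
          exact B.chain_succ_le i
        · right
          have hdvd : Nat.card ↥(braceChainAux B (i+1)) ∣ p ^ k := by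
            rw [← hk]
            exact AddSubgroup.card_dvd_of_le (B.chain_succ_le i)
          obtain ⟨k', hk'le, hk'⟩ := (Nat.dvd_prime_pow hp).mp hdvd
          refine ⟨k', hk', ?_⟩
          have hne : k' ≠ k := by
            intro hkk
            apply heq
            refine AddSubgroup.eq_of_le_of_card_ge (B.chain_succ_le i) ?_
            rw [hk, hk', hkk]
          omega
  rcases key (n + 1) with hbot | ⟨k, _, hki⟩
  · exact hbot
  · omega

end LeftBrace

section EndLemmas

theorem end_sum_apply {M : Type*} [AddCommMonoid M] {ι : Type*} (s : Finset ι)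
    (f : ι → AddMonoid.End M) (x : M) : (∑ i ∈ s, f i) x = ∑ i ∈ s, f i x := by
  classical
  induction s using Finset.induction with
  | empty => simp [AddMonoid.End.zero_apply]
  | insert _ _ hnot ih =>
    rw [Finset.sum_insert hnot, Finset.sum_insert hnot, ← ih]
    rfl

theorem end_mul_apply {M : Type*} [AddCommMonoid M] (f g : AddMonoid.End M) (x : M) :
    (f * g) x = f (g x) := rfl

theorem end_add_apply {M : Type*} [AddCommMonoid M] (f g : AddMonoid.End M) (x : M) :
    (f + g) x = f x + g x := rfl

theorem aeval_C_mul_X_pow_apply {M : Type*} [AddCommGroup M] (L : AddMonoid.End M)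
    (c : ℤ) (j : ℕ) (x : M) :
    (Polynomial.aeval L (Polynomial.C c * Polynomial.X ^ j)) x = c • ((L ^ j) x) := by
  rw [map_mul, Polynomial.aeval_C, map_pow, Polynomial.aeval_X, algebraMap_int_eq]
  show ((Int.castRingHom (AddMonoid.End M)) c) ((L ^ j) x) = _
  exact AddMonoid.End.intCast_apply c _

theorem aeval_sum_C_mul_X_pow_apply {M : Type*} [AddCommGroup M] (L : AddMonoid.End M)
    (m : ℕ) (c : ℕ → ℤ) (x : M) :
    (Polynomial.aeval L (∑ j ∈ Finset.range m, Polynomial.C (c j) * Polynomial.X ^ j)) x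
      = ∑ j ∈ Finset.range m, c j • ((L ^ j) x) := by
  rw [map_sum, end_sum_apply]
  exact Finset.sum_congr rfl fun j _ => aeval_C_mul_X_pow_apply L (c j) j x

end EndLemmas

/-- The integer coefficients `C(p-1,j)/(j+1)`. -/
def cNat (p j : ℕ) : ℕ := Nat.choose (p - 1) j / (j + 1)

theorem cNat_mul {p : ℕ} (hp : p.Prime) {j : ℕ} (hj : j + 1 < p) :
    p * cNat p j = Nat.choose p (j + 1) := by
  have hq : p - 1 + 1 = p := Nat.succ_pred_eq_of_pos hp.pos
  have hs := Nat.add_one_mul_choose_eq (p - 1) j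
  rw [hq] at hs
  -- hs : p * Nat.choose (p-1) j = Nat.choose p (j+1) * (j+1)
  have hnd : ¬ p ∣ (j + 1) := by
    intro hd
    have := Nat.le_of_dvd (Nat.succ_pos j) hd
    omega
  have hcop : Nat.Coprime (j + 1) p := ((hp.coprime_iff_not_dvd).mpr hnd).symm
  have hdvd1 : (j + 1) ∣ p * Nat.choose (p - 1) j :=
    ⟨Nat.choose p (j + 1), by rw [hs]; ring⟩
  have hdvd : (j + 1) ∣ Nat.choose (p - 1) j := by
    rcases hcop.dvd_of_dvd_mul_left hdvd1 with h
    exact h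
  rw [cNat, ← Nat.mul_div_assoc p hdvd, hs, Nat.mul_div_cancel _ (Nat.succ_pos j)]

theorem cNat_zero {p : ℕ} (hp : 2 ≤ p) : cNat p 0 = 1 := by
  simp [cNat]

/-- `h(X) = ∑_{j<p-1} (C(p-1,j)/(j+1)) Xʲ`. -/
noncomputable def hPoly (p : ℕ) : Polynomial ℤ :=
  ∑ j ∈ Finset.range (p - 1), Polynomial.C ((cNat p j : ℤ)) * Polynomial.X ^ j

theorem hPoly_coeff_zero {p : ℕ} (hp : p.Prime) : (hPoly p).coeff 0 = 1 := by
  have h2 := hp.two_le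
  rw [hPoly, Polynomial.finset_sum_coeff]
  rw [Finset.sum_eq_single 0]
  · simp [cNat_zero h2]
  · intro j _ hj
    simp [Polynomial.coeff_C_mul, Polynomial.coeff_X_pow, hj]
    intro h; omega
  · intro h
    exfalso
    apply h
    simp
    omega

open Polynomial in
theorem key_eq {p : ℕ} (hp : p.Prime) :
    (1 + X : Polynomial ℤ) ^ p = 1 + (p : Polynomial ℤ) * (X * hPoly p) + X ^ p := by
  obtain ⟨q, hq⟩ : ∃ q, p = q + 1 := ⟨p - 1, (Nat.succ_pred_eq_of_pos hp.pos).symm⟩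
  have expand : (1 + X : Polynomial ℤ) ^ p
      = ∑ k ∈ Finset.range (p + 1), (p.choose k : Polynomial ℤ) * X ^ k := by
    rw [add_comm (1 : Polynomial ℤ) X, add_pow]
    refine Finset.sum_congr rfl fun k _ => ?_
    rw [one_pow]; ring
  have hright : (p : Polynomial ℤ) * (X * hPoly p)
      = ∑ j ∈ Finset.range q, (p.choose (j + 1) : Polynomial ℤ) * X ^ (j + 1) := by
    rw [hPoly, Finset.mul_sum, Finset.mul_sum]
    have hq1 : p - 1 = q := by omega
    rw [hq1]
    refine Finset.sum_congr rfl fun j hj => ?_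
    have hjq : j < q := Finset.mem_range.mp hj
    have hlt : j + 1 < p := by omega
    have hcoef := cNat_mul hp hlt
    have : ((p * cNat p j : ℕ) : Polynomial ℤ) * X ^ (j + 1)
        = (p : Polynomial ℤ) * (X * (Polynomial.C ((cNat p j : ℕ) : ℤ) * X ^ j)) := by
      rw [map_natCast (Polynomial.C : ℤ →+* Polynomial ℤ) (cNat p j)]
      push_cast
      ring
    rw [← this, hcoef]
  rw [expand, hright, hq]
  rw [Finset.sum_range_succ, Finset.sum_range_succ']
  have h1 : q + 1 - 1 = q := by omega
  rw [Nat.choose_self, Nat.choose_zero_right]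
  push_cast
  ring

open Polynomial in
theorem gsum_eq {p : ℕ} (hp : p.Prime) :
    (∑ j ∈ Finset.range p, (1 + X : Polynomial ℤ) ^ j)
      = (p : Polynomial ℤ) * hPoly p + X ^ (p - 1) := by
  obtain ⟨q, hq⟩ : ∃ q, p = q + 1 := ⟨p - 1, (Nat.succ_pred_eq_of_pos hp.pos).symm⟩
  have hX : (X : Polynomial ℤ) ≠ 0 := Polynomial.X_ne_zero
  apply mul_left_cancel₀ hX
  have hg := geom_sum_mul (1 + X : Polynomial ℤ) p
  rw [add_sub_cancel_left] at hg
  -- hg : (∑ j ∈ range p, (1+X)^j) * X = (1+X)^p - 1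
  rw [show (X : Polynomial ℤ) * (∑ j ∈ Finset.range p, (1 + X : Polynomial ℤ) ^ j)
      = (∑ j ∈ Finset.range p, (1 + X : Polynomial ℤ) ^ j) * X from mul_comm _ _, hg,
    key_eq hp]
  have hXp : (X : Polynomial ℤ) ^ p = X * X ^ (p - 1) := by
    rw [show p - 1 = q from by omega, hq, pow_succ']
  rw [hXp]
  ring

namespace LeftBrace
variable {A : Type u} [AddCommGroup A] (B : LeftBrace A)

theorem eSeq_eq (a : A) (j : ℕ) : eSeq B a j = ((B.sE a) ^ j) a := by
  induction j with
  | zero => rw [pow_zero]; rfl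
  | succ j ih =>
    show B.star a (eSeq B a j) = _
    rw [← B.sE_apply, ih, pow_succ']
    rfl


theorem fMap_eq (p : ℕ) (a : A) :
    fMap B p a = (Polynomial.aeval (R := ℤ) (B.sE a) (hPoly p)) a := by
  rw [hPoly, aeval_sum_C_mul_X_pow_apply, fMap]
  rw [← Finset.Ico_add_one_right_eq_Icc, Finset.sum_Ico_eq_sum_range]
  refine Finset.sum_congr rfl fun j _ => ?_
  have h1 : 1 + j - 1 = j := by omega
  have h2 : 1 + j = j + 1 := by omega
  rw [h1, h2, eSeq_eq]
  show cNat p j • ((B.sE a ^ j) a) = _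
  rw [natCast_zsmul]

theorem lamE_eq (a : A) :
    B.lamE a = Polynomial.aeval (R := ℤ) (B.sE a) (1 + Polynomial.X) := by
  rw [map_add, map_one, Polynomial.aeval_X, sE]
  abel

theorem circPow_eq (a : A) (k : ℕ) :
    circPow B a k = (Polynomial.aeval (R := ℤ) (B.sE a)
      (∑ j ∈ Finset.range k, (1 + Polynomial.X) ^ j)) a := by
  induction k with
  | zero =>
    show B.one = _
    rw [B.one_eq_zero]
    simp
  | succ k ih =>
    show B.circ a (circPow B a k) = _
    have h1 : B.circ a (circPow B a k) = B.lamE a (circPow B a k) + a := by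
      rw [lamE_apply]; abel
    rw [h1, ih, ← end_mul_apply, lamE_eq, ← map_mul]
    have h2 : (∑ j ∈ Finset.range (k + 1), (1 + Polynomial.X : Polynomial ℤ) ^ j)
        = (1 + Polynomial.X) * (∑ j ∈ Finset.range k, (1 + Polynomial.X) ^ j) + 1 :=
      geom_sum_succ
    rw [h2, map_add, map_one, end_add_apply, AddMonoid.End.one_apply]

theorem sE_pow_apply_eq_zero {p n : ℕ} (hp : p.Prime) (hcard : Nat.card A = p ^ n)
    (a x : A) {m : ℕ} (hm : n + 1 ≤ m) : ((B.sE a) ^ m) x = 0 := by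
  have h1 := B.sE_pow_mem a x m
  have h2 : braceChainAux B m ≤ braceChainAux B (n + 1) := B.chain_le hm
  rw [chain_bot p n hp B hcard] at h2
  exact (AddSubgroup.mem_bot).mp (h2 h1)

theorem lamE_circPow (a : A) (k : ℕ) : B.lamE (circPow B a k) = (B.lamE a) ^ k := by
  induction k with
  | zero =>
    show B.lamE B.one = _
    rw [B.one_eq_zero, B.lamE_zero, pow_zero]
  | succ k ih =>
    show B.lamE (B.circ a (circPow B a k)) = _
    rw [B.lamE_circ, ih, pow_succ']

/-- Part 1: `p•f(a) = a^{∘p}`. -/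
theorem part1 {p n : ℕ} (hp : p.Prime) (hpn : n + 1 < p) (hcard : Nat.card A = p ^ n)
    (a : A) : p • fMap B p a = circPow B a p := by
  rw [circPow_eq, gsum_eq hp, map_add, end_add_apply, map_mul,
    Polynomial.aeval_natCast, map_pow, Polynomial.aeval_X]
  rw [end_mul_apply, AddMonoid.End.natCast_apply]
  rw [B.sE_pow_apply_eq_zero hp hcard a a (by omega), add_zero, fMap_eq]

/-- The star-by-`a^{∘p}` formula. -/
theorem star_circPow {p n : ℕ} (hp : p.Prime) (hpn : n + 1 < p) (hcard : Nat.card A = p ^ n)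
    (a w : A) :
    B.star (circPow B a p) w
      = p • ((Polynomial.aeval (R := ℤ) (B.sE a) (Polynomial.X * hPoly p)) w) := by
  rw [star_eq, lamE_circPow]
  have h1 : (B.lamE a) ^ p = Polynomial.aeval (R := ℤ) (B.sE a) ((1 + Polynomial.X) ^ p) := by
    rw [map_pow, ← lamE_eq]
  rw [h1, key_eq hp, map_add, map_add, map_one, map_mul, Polynomial.aeval_natCast,
    map_pow, Polynomial.aeval_X]
  rw [end_add_apply, end_add_apply, AddMonoid.End.one_apply,
    end_mul_apply, AddMonoid.End.natCast_apply]
  rw [B.sE_pow_apply_eq_zero hp hcard a w (by omega), add_zero]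
  abel

end LeftBrace

theorem aeval_C_mul_apply {M : Type*} [AddCommGroup M] (L : AddMonoid.End M)
    (c : ℤ) (q : Polynomial ℤ) (x : M) :
    (Polynomial.aeval (R := ℤ) L (Polynomial.C c * q)) x
      = c • ((Polynomial.aeval (R := ℤ) L q) x) := by
  rw [map_mul, Polynomial.aeval_C, algebraMap_int_eq]
  show ((Int.castRingHom (AddMonoid.End M)) c) _ = _
  exact AddMonoid.End.intCast_apply c _

open Polynomial in
theorem poly_alpha (h : Polynomial ℤ) (h0 : h.coeff 0 = 1) (m : ℕ) :
    ∃ α : ℕ → ℤ, α 0 = 1 ∧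
      (X : Polynomial ℤ) ^ m ∣
        (∑ i ∈ Finset.range m, Polynomial.C (α i) * (X * h) ^ i) * h - 1 := by
  induction m with
  | zero =>
    refine ⟨fun _ => 1, rfl, ?_⟩
    simp
  | succ m ih =>
    obtain ⟨α, hα0, r, hr⟩ := ih
    set β : ℕ → ℤ := fun i => if i = m then -(r.coeff 0) else α i with hβ
    have hβ0 : β 0 = 1 := by
      by_cases hm : m = 0
      · subst hm
        have hrr : r = -1 := by
          rw [Finset.range_zero, Finset.sum_empty, zero_mul, pow_zero, one_mul] at hr
          rw [← hr]
          ring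
        simp [hβ, hrr]
      · show (if 0 = m then -(r.coeff 0) else α 0) = 1
        rw [if_neg (fun hh => hm hh.symm), hα0]
    refine ⟨β, hβ0, ?_⟩
    have hsum : (∑ i ∈ Finset.range (m + 1), Polynomial.C (β i) * (X * h) ^ i)
        = (∑ i ∈ Finset.range m, Polynomial.C (α i) * (X * h) ^ i)
          + Polynomial.C (-(r.coeff 0)) * (X * h) ^ m := by
      rw [Finset.sum_range_succ]
      congr 1
      · refine Finset.sum_congr rfl fun i hi => ?_
        have : i ≠ m := by
          have := Finset.mem_range.mp hi; omega
        simp [hβ, this]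
      · simp [hβ]
    rw [hsum, add_mul]
    have heq : (∑ i ∈ Finset.range m, Polynomial.C (α i) * (X * h) ^ i) * h
        + Polynomial.C (-(r.coeff 0)) * (X * h) ^ m * h - 1
        = X ^ m * (r + Polynomial.C (-(r.coeff 0)) * h ^ (m + 1)) := by
      have h1 : (∑ i ∈ Finset.range m, Polynomial.C (α i) * (X * h) ^ i) * h
          = 1 + X ^ m * r := by
        rw [← hr]; ring
      rw [h1, mul_pow]
      ring
    rw [heq]
    have hdvd : (X : Polynomial ℤ) ∣ r + Polynomial.C (-(r.coeff 0)) * h ^ (m + 1) := by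
      rw [Polynomial.X_dvd_iff]
      rw [Polynomial.coeff_add, Polynomial.coeff_C_mul]
      have hpow : (h ^ (m + 1)).coeff 0 = 1 := by
        rw [Polynomial.coeff_zero_eq_eval_zero, Polynomial.eval_pow,
          ← Polynomial.coeff_zero_eq_eval_zero, h0, one_pow]
      rw [hpow]
      ring
    obtain ⟨s, hs⟩ := hdvd
    rw [hs, pow_succ]
    exact ⟨s, by ring⟩

open Polynomial in
theorem stmt_5' (p n : ℕ) (hp : p.Prime) (hpn : n + 1 < p)
    (A : Type u) [AddCommGroup A] (hcard : Nat.card A = p ^ n) :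
    (∀ (B : LeftBrace A) (a : A), p • fMap B p a = circPow B a p) ∧
    ∃ α : ℕ → ℤ, α 1 = 1 ∧
      ∀ (B : LeftBrace A)
        (odot : (A ⧸ annSub A (p ^ 2)) → (A ⧸ annSub A (p ^ 2)) → (A ⧸ annSub A (p ^ 2))),
        (∀ a b c : A, p • c = B.star (p • a) b →
          odot (qmk (p ^ 2) a) (qmk (p ^ 2) b) = qmk (p ^ 2) c) →
        ∀ a : A,
          qmk (p ^ 2) a = ∑ i ∈ Finset.Icc 1 (p - 1),
            α i • iterOp odot (qmk (p ^ 2) (fMap B p a)) (qmk (p ^ 2) (fMap B p a)) (i - 1) := by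
  constructor
  · intro B a
    exact B.part1 hp hpn hcard a
  · obtain ⟨α', hα'0, hdvd⟩ := poly_alpha (hPoly p) (hPoly_coeff_zero hp) (p - 1)
    refine ⟨fun i => α' (i - 1), hα'0, ?_⟩
    intro B odot hodot a
    set L : AddMonoid.End A := B.sE a with hL
    set W : ℕ → A := fun i =>
      (Polynomial.aeval (R := ℤ) L ((X * hPoly p) ^ i * hPoly p)) a with hWdef
    have hW0 : W 0 = fMap B p a := by
      show (Polynomial.aeval (R := ℤ) L ((X * hPoly p) ^ 0 * hPoly p)) a = _
      rw [pow_zero, one_mul, B.fMap_eq]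
    have hWstep : ∀ i, p • W (i + 1) = B.star (p • fMap B p a) (W i) := by
      intro i
      rw [B.part1 hp hpn hcard a, B.star_circPow hp hpn hcard a (W i)]
      congr 1
      show (Polynomial.aeval (R := ℤ) L ((X * hPoly p) ^ (i + 1) * hPoly p)) a
        = (Polynomial.aeval (R := ℤ) L (X * hPoly p))
            ((Polynomial.aeval (R := ℤ) L ((X * hPoly p) ^ i * hPoly p)) a)
      rw [← end_mul_apply, ← map_mul]
      congr 2
      rw [pow_succ']
      ring
    have hiter : ∀ i, iterOp odot (qmk (p ^ 2) (fMap B p a)) (qmk (p ^ 2) (fMap B p a)) i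
        = qmk (p ^ 2) (W i) := by
      intro i
      induction i with
      | zero =>
        show qmk (p ^ 2) (fMap B p a) = _
        rw [hW0]
      | succ i ih =>
        show odot (qmk (p ^ 2) (fMap B p a))
          (iterOp odot (qmk (p ^ 2) (fMap B p a)) (qmk (p ^ 2) (fMap B p a)) i) = _
        rw [ih]
        exact hodot (fMap B p a) (W i) (W (i + 1)) (hWstep i)
    obtain ⟨r, hr⟩ := hdvd
    have hA : ∑ j ∈ Finset.range (p - 1), α' j • W j = a := by
      have e1 : ∑ j ∈ Finset.range (p - 1), α' j • W j
          = (Polynomial.aeval (R := ℤ) L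
              ((∑ j ∈ Finset.range (p - 1), Polynomial.C (α' j) * (X * hPoly p) ^ j)
                * hPoly p)) a := by
        rw [Finset.sum_mul, map_sum, end_sum_apply]
        refine Finset.sum_congr rfl fun j _ => ?_
        rw [mul_assoc, aeval_C_mul_apply]
      have e2 : (∑ j ∈ Finset.range (p - 1), Polynomial.C (α' j) * (X * hPoly p) ^ j)
            * hPoly p
          = 1 + X ^ (p - 1) * r := by
        rw [← hr]; ring
      rw [e1, e2, map_add, map_one, end_add_apply, AddMonoid.End.one_apply,
        map_mul, map_pow, Polynomial.aeval_X, end_mul_apply]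
      rw [hL, B.sE_pow_apply_eq_zero hp hcard a _ (by omega), add_zero]
    calc qmk (p ^ 2) a
        = (QuotientAddGroup.mk' (annSub A (p ^ 2)))
            (∑ j ∈ Finset.range (p - 1), α' j • W j) := by rw [hA]; rfl
      _ = ∑ j ∈ Finset.range (p - 1), α' j • qmk (p ^ 2) (W j) := by
          rw [map_sum]
          exact Finset.sum_congr rfl fun j _ => by rw [map_zsmul]; rfl
      _ = ∑ i ∈ Finset.Icc 1 (p - 1), α' (i - 1) •
            iterOp odot (qmk (p ^ 2) (fMap B p a)) (qmk (p ^ 2) (fMap B p a)) (i - 1) := by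
          rw [← Finset.Ico_add_one_right_eq_Icc, Finset.sum_Ico_eq_sum_range]
          refine Finset.sum_congr rfl fun j _ => ?_
          have hj : 1 + j - 1 = j := by omega
          rw [hj, hiter]

/-- `p·f(a) = a^{∘p}`, and there are integers `α_1,…,α_{p−1}` depending only
on the additive group `(A,+)`, with `α_1 = 1`, such that `[a] = Σ_{i=1}^{p−1} α_i·[f_i(a)]`
in `A/ann(p²)`, where `[f_1(a)] = [f(a)]` and `[f_{i+1}(a)] = [f(a)]⊙[f_i(a)]`. -/
theorem stmt_5 (p n : ℕ) (hp : p.Prime) (hpn : n + 1 < p)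
    (A : Type u) [AddCommGroup A] (hcard : Nat.card A = p ^ n) :
    (∀ (B : LeftBrace A) (a : A), p • fMap B p a = circPow B a p) ∧
    ∃ α : ℕ → ℤ, α 1 = 1 ∧
      ∀ (B : LeftBrace A)
        (odot : (A ⧸ annSub A (p ^ 2)) → (A ⧸ annSub A (p ^ 2)) → (A ⧸ annSub A (p ^ 2))),
        (∀ a b c : A, p • c = B.star (p • a) b →
          odot (qmk (p ^ 2) a) (qmk (p ^ 2) b) = qmk (p ^ 2) c) →
        ∀ a : A,
          qmk (p ^ 2) a = ∑ i ∈ Finset.Icc 1 (p - 1),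
            α i • iterOp odot (qmk (p ^ 2) (fMap B p a)) (qmk (p ^ 2) (fMap B p a)) (i - 1) :=
  stmt_5' p n hp hpn A hcard
end
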